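/- (Countable downward Löwenheim–Skolem for SCL and BndSCL.) Let φ be a sentence of SCL (respectively, of BndSCL) and let 𝔄 be a model with 𝔄 ⊨ φ under unbounded semantics (respectively, 𝔄 ⊨_ω φ under bounded semantics). Then there exists a countable substructure 𝔅 of 𝔄 such that 𝔅 ⊨ φ (respectively, 𝔅 ⊨_ω φ). -/

import Mathlib

/-
Common formalization of the logics SCL (static computation logic, unbounded
game-theoretic semantics) and BndSCL (bounded semantics), following the paper
"First-order logic with self-reference".

* Games are played on arbitrary (possibly infinite) arenas; plays are maximal
  walks; strategies are functions from finite walks (histories) to positions;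
  infinite plays, and finite plays ending at a dead end where `win` holds for
  neither player, are won by nobody.
* The semantic games are formalized with positions carrying the current
  (sub)formula, an environment binding each label symbol to the labelled
  formula it most recently named (this is the standard closure rendering of
  "reference formula of a claim-symbol occurrence"), the current assignment
  and the polarity (+ = true, − = false).  The bounded game additionally
  carries a clock value.
-/

set_option autoImplicit false

universe u

/-! ## Generic two-player games on (possibly infinite) arenas -/

inductive Player : Type
  | eloise : Player
  | abelard : Player
deriving DecidableEq

def Player.opp : Player → Player
  | .eloise => .abelard
  | .abelard => .eloise

/-- A game arena: an ownership function (corresponding to the partition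
`V = V₀ ∪ V₁`), an edge relation, and a predicate telling which player (if
any) wins a play ending at a given dead-end position. -/
structure GameArena (P : Type u) where
  turn : P → Player
  edge : P → P → Prop
  win : P → Player → Prop

namespace GameArena

variable {P : Type u} (A : GameArena P)

def DeadEnd (u : P) : Prop := ∀ x, ¬ A.edge u x

/-- `w` is a finite nonempty walk whose first element is `v`. -/
def IsWalkFrom (v : P) (w : List P) : Prop :=
  w.head? = some v ∧ List.Chain' A.edge w

/-- A finite (maximal) play from `v`: a walk whose last element is a dead end. -/
def IsFinitePlay (v : P) (w : List P) : Prop :=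
  A.IsWalkFrom v w ∧ ∀ u, w.getLast? = some u → A.DeadEnd u

/-- An infinite play from `v`. -/
def IsInfPlay (v : P) (f : ℕ → P) : Prop :=
  f 0 = v ∧ ∀ n, A.edge (f n) (f (n + 1))

/-- A strategy (a function from histories to positions) of player `pl` is
legal if it always prescribes a move along an edge whenever a move exists. -/
def LegalFor (pl : Player) (v : P) (σ : List P → P) : Prop :=
  ∀ w u, A.IsWalkFrom v w → w.getLast? = some u → A.turn u = pl →
    (∃ x, A.edge u x) → A.edge u (σ w)

/-- The strategy `σ` of player `pl` is followed in the finite play `w`. -/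
def FollowsFin (pl : Player) (σ : List P → P) (w : List P) : Prop :=
  ∀ q u x, (q ++ [x]) <+: w → q.getLast? = some u → A.turn u = pl → x = σ q

/-- The strategy `σ` of player `pl` is followed in the infinite play `f`. -/
def FollowsInf (pl : Player) (σ : List P → P) (f : ℕ → P) : Prop :=
  ∀ n, A.turn (f n) = pl →
    f (n + 1) = σ (List.ofFn fun i : Fin (n + 1) => f i)

/-- `σ` is a winning strategy of player `pl` from `v`: it is legal, every
finite maximal play following it ends in a dead end won by `pl`, and no
infinite play follows it (infinite plays are won by neither player). -/
def WinningStrategy (pl : Player) (v : P) (σ : List P → P) : Prop :=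
  A.LegalFor pl v σ ∧
  (∀ w, A.IsFinitePlay v w → A.FollowsFin pl σ w →
      ∃ u, w.getLast? = some u ∧ A.win u pl) ∧
  (∀ f, A.IsInfPlay v f → ¬ A.FollowsInf pl σ f)

def HasWinningStrategy (pl : Player) (v : P) : Prop :=
  ∃ σ : List P → P, A.WinningStrategy pl v σ

end GameArena

/-- A positional strategy: its moves depend only on the current position. -/
def Positional {P : Type u} (σ : List P → P) : Prop :=
  ∀ q q' : List P, q.getLast? = q'.getLast? → σ q = σ q'

/-! ## Syntax of SCL / BndSCL -/

/-- A purely relational vocabulary. -/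
structure Vocab : Type 1 where
  Rel : Type
  arity : Rel → ℕ

/-- Formulas of SCL / BndSCL over the vocabulary `V`.  Variables and label
symbols are natural numbers; `claim L` is the claim symbol `C_L` and
`lab L φ` is the labelled formula `L φ`. -/
inductive SCLFormula (V : Vocab) : Type
  | bot : SCLFormula V
  | eq (x y : ℕ) : SCLFormula V
  | rel (R : V.Rel) (args : Fin (V.arity R) → ℕ) : SCLFormula V
  | claim (L : ℕ) : SCLFormula V
  | not (φ : SCLFormula V) : SCLFormula V
  | and (φ ψ : SCLFormula V) : SCLFormula V
  | or (φ ψ : SCLFormula V) : SCLFormula V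
  | ex (x : ℕ) (φ : SCLFormula V) : SCLFormula V
  | all (x : ℕ) (φ : SCLFormula V) : SCLFormula V
  | lab (L : ℕ) (φ : SCLFormula V) : SCLFormula V

namespace SCLFormula

variable {V : Vocab}

/-- First-order atoms. -/
def IsFOAtom : SCLFormula V → Prop
  | .bot => True
  | .eq _ _ => True
  | .rel _ _ => True
  | _ => False

/-- Purely first-order formulas (no claim symbols, no label symbols). -/
def IsFO : SCLFormula V → Prop
  | .bot => True
  | .eq _ _ => True
  | .rel _ _ => True
  | .claim _ => False
  | .not φ => IsFO φ
  | .and φ ψ => IsFO φ ∧ IsFO ψ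
  | .or φ ψ => IsFO φ ∧ IsFO ψ
  | .ex _ φ => IsFO φ
  | .all _ φ => IsFO φ
  | .lab _ _ => False

/-- Free (individual) variables. -/
def freeVars : SCLFormula V → Finset ℕ
  | .bot => ∅
  | .eq x y => {x, y}
  | .rel _ a => Finset.image a Finset.univ
  | .claim _ => ∅
  | .not φ => freeVars φ
  | .and φ ψ => freeVars φ ∪ freeVars ψ
  | .or φ ψ => freeVars φ ∪ freeVars ψ
  | .ex x φ => freeVars φ \ {x}
  | .all x φ => freeVars φ \ {x}
  | .lab _ φ => freeVars φ

/-- All variables occurring in a formula (free or bound). -/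
def vars : SCLFormula V → Finset ℕ
  | .bot => ∅
  | .eq x y => {x, y}
  | .rel _ a => Finset.image a Finset.univ
  | .claim _ => ∅
  | .not φ => vars φ
  | .and φ ψ => vars φ ∪ vars ψ
  | .or φ ψ => vars φ ∪ vars ψ
  | .ex x φ => insert x (vars φ)
  | .all x φ => insert x (vars φ)
  | .lab _ φ => vars φ

/-- Sentences: formulas with no free variables. -/
def IsSentence (φ : SCLFormula V) : Prop := freeVars φ = ∅

end SCLFormula

/-! ## Structures and first-order (Tarski) satisfaction -/

/-- A (suitable) model for vocabulary `V`: a nonempty domain together with an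
interpretation of all relation symbols. -/
structure Struct (V : Vocab) where
  Dom : Type u
  dom_nonempty : Nonempty Dom
  interp : ∀ R : V.Rel, (Fin (V.arity R) → Dom) → Prop

attribute [instance] Struct.dom_nonempty

/-- Satisfaction of atoms (false on non-atoms). -/
def atomSat {V : Vocab} (M : Struct.{u} V) (s : ℕ → M.Dom) : SCLFormula V → Prop
  | .bot => False
  | .eq x y => s x = s y
  | .rel R a => M.interp R fun i => s (a i)
  | _ => False

/-- Standard (Tarski) first-order satisfaction.  It is only meaningful on
purely first-order formulas; claim symbols are interpreted as `False` and
label symbols are ignored. -/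
def FOSat {V : Vocab} (M : Struct.{u} V) : (ℕ → M.Dom) → SCLFormula V → Prop
  | _, .bot => False
  | s, .eq x y => s x = s y
  | s, .rel R a => M.interp R fun i => s (a i)
  | _, .claim _ => False
  | s, .not φ => ¬ FOSat M s φ
  | s, .and φ ψ => FOSat M s φ ∧ FOSat M s ψ
  | s, .or φ ψ => FOSat M s φ ∨ FOSat M s ψ
  | s, .ex x φ => ∃ a : M.Dom, FOSat M (Function.update s x a) φ
  | s, .all x φ => ∀ a : M.Dom, FOSat M (Function.update s x a) φ
  | s, .lab _ φ => FOSat M s φ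

/-! ## The evaluation games -/

/-- A position of the semantic game: the current formula, the environment
recording for each label symbol `L` the reference formula `L ψ` it currently
names, the current assignment, and the polarity (`true` = `+`). -/
structure SCLPos (V : Vocab) (D : Type u) : Type u where
  form : SCLFormula V
  env : ℕ → Option (SCLFormula V)
  asg : ℕ → D
  pol : Bool

/-- Which player moves at a given position. (At positions with at most one
successor the owner is irrelevant; we let Eloise own them.) -/
def posTurn {V : Vocab} {D : Type u} (p : SCLPos V D) : Player :=
  match p.form, p.pol with
  | .and _ _, true => .abelard
  | .and _ _, false => .eloise
  | .or _ _, true => .eloise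
  | .or _ _, false => .abelard
  | .all _ _, true => .abelard
  | .all _ _, false => .eloise
  | .ex _ _, true => .eloise
  | .ex _ _, false => .abelard
  | _, _ => .eloise

/-- Who wins a play ending at a given position: at an FO-atom position,
Eloise wins iff the atom's truth value agrees with the polarity, and Abelard
wins otherwise; plays ending anywhere else (e.g. at a claim symbol with no
reference formula, or with clock value 0) are won by neither player. -/
def posWin {V : Vocab} (M : Struct.{u} V) (p : SCLPos V M.Dom) : Player → Prop
  | .eloise => p.form.IsFOAtom ∧ (atomSat M p.asg p.form ↔ p.pol = true)
  | .abelard => p.form.IsFOAtom ∧ ¬ (atomSat M p.asg p.form ↔ p.pol = true)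

/-- Moves of the unbounded evaluation game `G_∞`. -/
inductive UStep {V : Vocab} (M : Struct.{u} V) :
    SCLPos V M.Dom → SCLPos V M.Dom → Prop
  | neg (φ : SCLFormula V) (e : ℕ → Option (SCLFormula V)) (s : ℕ → M.Dom) (b : Bool) :
      UStep M ⟨.not φ, e, s, b⟩ ⟨φ, e, s, !b⟩
  | andLeft (φ ψ : SCLFormula V) (e : ℕ → Option (SCLFormula V)) (s : ℕ → M.Dom) (b : Bool) :
      UStep M ⟨.and φ ψ, e, s, b⟩ ⟨φ, e, s, b⟩
  | andRight (φ ψ : SCLFormula V) (e : ℕ → Option (SCLFormula V)) (s : ℕ → M.Dom) (b : Bool) :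
      UStep M ⟨.and φ ψ, e, s, b⟩ ⟨ψ, e, s, b⟩
  | orLeft (φ ψ : SCLFormula V) (e : ℕ → Option (SCLFormula V)) (s : ℕ → M.Dom) (b : Bool) :
      UStep M ⟨.or φ ψ, e, s, b⟩ ⟨φ, e, s, b⟩
  | orRight (φ ψ : SCLFormula V) (e : ℕ → Option (SCLFormula V)) (s : ℕ → M.Dom) (b : Bool) :
      UStep M ⟨.or φ ψ, e, s, b⟩ ⟨ψ, e, s, b⟩
  | exStep (x : ℕ) (φ : SCLFormula V) (e : ℕ → Option (SCLFormula V)) (s : ℕ → M.Dom)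
      (b : Bool) (a : M.Dom) :
      UStep M ⟨.ex x φ, e, s, b⟩ ⟨φ, e, Function.update s x a, b⟩
  | allStep (x : ℕ) (φ : SCLFormula V) (e : ℕ → Option (SCLFormula V)) (s : ℕ → M.Dom)
      (b : Bool) (a : M.Dom) :
      UStep M ⟨.all x φ, e, s, b⟩ ⟨φ, e, Function.update s x a, b⟩
  | labStep (L : ℕ) (φ : SCLFormula V) (e : ℕ → Option (SCLFormula V)) (s : ℕ → M.Dom)
      (b : Bool) :
      UStep M ⟨.lab L φ, e, s, b⟩ ⟨φ, Function.update e L (some (.lab L φ)), s, b⟩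
  | claimStep (L : ℕ) (e : ℕ → Option (SCLFormula V)) (s : ℕ → M.Dom) (b : Bool)
      (χ : SCLFormula V) (h : e L = some χ) :
      UStep M ⟨.claim L, e, s, b⟩ ⟨χ, e, s, b⟩

/-- Moves of the `n`-bounded evaluation game: positions additionally carry a
clock value, which decreases by one exactly at jumps from a claim symbol to
its reference formula; a claim-symbol position with clock value `0` is a dead
end won by neither player. -/
inductive BStep {V : Vocab} (M : Struct.{u} V) :
    SCLPos V M.Dom × ℕ → SCLPos V M.Dom × ℕ → Prop
  | neg (φ : SCLFormula V) (e : ℕ → Option (SCLFormula V)) (s : ℕ → M.Dom) (b : Bool) (n : ℕ) :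
      BStep M (⟨.not φ, e, s, b⟩, n) (⟨φ, e, s, !b⟩, n)
  | andLeft (φ ψ : SCLFormula V) (e : ℕ → Option (SCLFormula V)) (s : ℕ → M.Dom) (b : Bool)
      (n : ℕ) : BStep M (⟨.and φ ψ, e, s, b⟩, n) (⟨φ, e, s, b⟩, n)
  | andRight (φ ψ : SCLFormula V) (e : ℕ → Option (SCLFormula V)) (s : ℕ → M.Dom) (b : Bool)
      (n : ℕ) : BStep M (⟨.and φ ψ, e, s, b⟩, n) (⟨ψ, e, s, b⟩, n)
  | orLeft (φ ψ : SCLFormula V) (e : ℕ → Option (SCLFormula V)) (s : ℕ → M.Dom) (b : Bool)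
      (n : ℕ) : BStep M (⟨.or φ ψ, e, s, b⟩, n) (⟨φ, e, s, b⟩, n)
  | orRight (φ ψ : SCLFormula V) (e : ℕ → Option (SCLFormula V)) (s : ℕ → M.Dom) (b : Bool)
      (n : ℕ) : BStep M (⟨.or φ ψ, e, s, b⟩, n) (⟨ψ, e, s, b⟩, n)
  | exStep (x : ℕ) (φ : SCLFormula V) (e : ℕ → Option (SCLFormula V)) (s : ℕ → M.Dom)
      (b : Bool) (n : ℕ) (a : M.Dom) :
      BStep M (⟨.ex x φ, e, s, b⟩, n) (⟨φ, e, Function.update s x a, b⟩, n)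
  | allStep (x : ℕ) (φ : SCLFormula V) (e : ℕ → Option (SCLFormula V)) (s : ℕ → M.Dom)
      (b : Bool) (n : ℕ) (a : M.Dom) :
      BStep M (⟨.all x φ, e, s, b⟩, n) (⟨φ, e, Function.update s x a, b⟩, n)
  | labStep (L : ℕ) (φ : SCLFormula V) (e : ℕ → Option (SCLFormula V)) (s : ℕ → M.Dom)
      (b : Bool) (n : ℕ) :
      BStep M (⟨.lab L φ, e, s, b⟩, n) (⟨φ, Function.update e L (some (.lab L φ)), s, b⟩, n)
  | claimStep (L : ℕ) (e : ℕ → Option (SCLFormula V)) (s : ℕ → M.Dom) (b : Bool)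
      (χ : SCLFormula V) (n : ℕ) (h : e L = some χ) :
      BStep M (⟨.claim L, e, s, b⟩, n + 1) (⟨χ, e, s, b⟩, n)

/-- The unbounded evaluation game `G_∞(𝔄, ·, ·)` as a game arena. -/
def gameU {V : Vocab} (M : Struct.{u} V) : GameArena (SCLPos V M.Dom) where
  turn := posTurn
  edge := UStep M
  win := posWin M

/-- The bounded evaluation games `G_n(𝔄, ·, ·)` (for all clock values `n`
simultaneously) as a game arena. -/
def gameB {V : Vocab} (M : Struct.{u} V) : GameArena (SCLPos V M.Dom × ℕ) where
  turn p := posTurn p.1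
  edge := BStep M
  win p := posWin M p.1

/-- The initial position of the evaluation game for `φ` under assignment `s`:
empty environment and positive polarity. -/
def initPos {V : Vocab} {D : Type u} (φ : SCLFormula V) (s : ℕ → D) : SCLPos V D :=
  ⟨φ, fun _ => none, s, true⟩

/-- Truth under the unbounded semantics (the logic SCL):
`𝔄,s ⊨ φ` iff Eloise has a winning strategy in `G_∞(𝔄,s,φ)`. -/
def SCLTrue {V : Vocab} (M : Struct.{u} V) (s : ℕ → M.Dom) (φ : SCLFormula V) : Prop :=
  (gameU M).HasWinningStrategy .eloise (initPos φ s)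

/-! ### The bounded game `G_ω` -/

/-- Positions of the game `G_ω`: the initial position (where Abelard picks a
number `n'`), the intermediate positions (where Eloise picks some `n ≥ n'`),
and the positions of the `n`-bounded games. -/
inductive GOPos (V : Vocab) (D : Type u) : Type u
  | start : GOPos V D
  | mid (n' : ℕ) : GOPos V D
  | inner (p : SCLPos V D) (clock : ℕ) : GOPos V D

inductive GOStep {V : Vocab} (M : Struct.{u} V) (φ : SCLFormula V) (s : ℕ → M.Dom) :
    GOPos V M.Dom → GOPos V M.Dom → Prop
  | abelardPick (n' : ℕ) : GOStep M φ s .start (.mid n')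
  | eloisePick (n' n : ℕ) (h : n' ≤ n) : GOStep M φ s (.mid n') (.inner (initPos φ s) n)
  | play (p q : SCLPos V M.Dom) (m k : ℕ) (h : BStep M (p, m) (q, k)) :
      GOStep M φ s (.inner p m) (.inner q k)

def goTurn {V : Vocab} {D : Type u} : GOPos V D → Player
  | .start => .abelard
  | .mid _ => .eloise
  | .inner p _ => posTurn p

def goWin {V : Vocab} (M : Struct.{u} V) : GOPos V M.Dom → Player → Prop
  | .inner p _, pl => posWin M p pl
  | _, _ => False

/-- The bounded evaluation game `G_ω(𝔄,s,φ)`: Abelard picks `n' ∈ ℕ`, then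
Eloise picks `n ≥ n'`, and then `G_n(𝔄,s,φ)` is played. -/
def gameOmega {V : Vocab} (M : Struct.{u} V) (φ : SCLFormula V) (s : ℕ → M.Dom) :
    GameArena (GOPos V M.Dom) where
  turn := goTurn
  edge := GOStep M φ s
  win := goWin M

/-- Truth under the bounded semantics (the logic BndSCL):
`𝔄,s ⊨_ω φ` iff Eloise has a winning strategy in `G_ω(𝔄,s,φ)`. -/
def BndTrue {V : Vocab} (M : Struct.{u} V) (s : ℕ → M.Dom) (φ : SCLFormula V) : Prop :=
  (gameOmega M φ s).HasWinningStrategy .eloise .start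

/-! ## Approximants -/

/-- Auxiliary structural recursion for approximants: `k` tells what to put in
place of a claim symbol.  Label symbols are deleted (while updating the
environment), and polarity is tracked through negations. -/
def approxCore {V : Vocab}
    (k : (ℕ → Option (SCLFormula V)) → Bool → ℕ → SCLFormula V) :
    (ℕ → Option (SCLFormula V)) → Bool → SCLFormula V → SCLFormula V
  | _, _, .bot => .bot
  | _, _, .eq x y => .eq x y
  | _, _, .rel R a => .rel R a
  | e, b, .claim L => k e b L
  | e, b, .not φ => .not (approxCore k e (!b) φ)
  | e, b, .and φ ψ => .and (approxCore k e b φ) (approxCore k e b ψ)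
  | e, b, .or φ ψ => .or (approxCore k e b φ) (approxCore k e b ψ)
  | e, b, .ex x φ => .ex x (approxCore k e b φ)
  | e, b, .all x φ => .all x (approxCore k e b φ)
  | e, b, .lab L φ => approxCore k (Function.update e L (some (.lab L φ))) b φ

/-- `approx n e b φ` unfolds each claim symbol of `φ` (in environment `e`,
under polarity `b`) through `n` jumps to reference formulas; claim symbols
reached with exhausted budget (or with no reference formula) are replaced by
`⊥` at positive occurrences and `⊤` (i.e. `¬⊥`) at negative occurrences, and
all label symbols are deleted. -/
def approx {V : Vocab} : ℕ → (ℕ → Option (SCLFormula V)) → Bool → SCLFormula V → SCLFormula V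
  | 0 => approxCore fun _ b _ => if b then .bot else .not .bot
  | n + 1 => approxCore fun e b L =>
      match e L with
      | some χ => approx n e b χ
      | none => if b then .bot else .not .bot

/-- The `n`-th approximant `Φⁿ_φ` of `φ`: the first-order formula obtained
from the `n`-th unfolding of `φ` by deleting all label symbols and replacing
positive claim occurrences by `⊥` and negative ones by `⊤`. -/
def approximant {V : Vocab} (φ : SCLFormula V) (n : ℕ) : SCLFormula V :=
  approx n (fun _ => none) true φ

/-- The substructure of `M` induced by a nonempty subset `B` of its domain. -/
def substruct {V : Vocab} (M : Struct.{u} V) (B : Set M.Dom) (hB : B.Nonempty) :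
    Struct.{u} V where
  Dom := ↥B
  dom_nonempty := hB.to_subtype
  interp := fun R t => M.interp R fun i => (t i : M.Dom)


/-! ## Auxiliary material for the proof of Statement 18 -/

universe v w


namespace GameArena

variable {P : Type u}

lemma chain'_all {A : GameArena P} (Q : P → Prop)
    (hstep : ∀ p q, Q p → A.edge p q → Q q) :
    ∀ (t : List P) (a : P), Q a → List.Chain' A.edge (a :: t) → ∀ p ∈ a :: t, Q p := by
  intro t
  induction t with
  | nil =>
    intro a ha _ p hp
    have : p = a := by simpa using hp
    subst this; exact ha
  | cons b t ih =>
    intro a ha hc p hp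
    simp only [List.Chain', List.isChain_cons_cons] at hc
    have hb : Q b := hstep a b ha hc.1
    rcases List.mem_cons.mp hp with rfl | hp
    · exact ha
    · exact ih b hb hc.2 p hp

lemma walk_all {A : GameArena P} {v : P} {w : List P} (Q : P → Prop)
    (h : A.IsWalkFrom v w) (hv : Q v) (hstep : ∀ p q, Q p → A.edge p q → Q q) :
    ∀ p ∈ w, Q p := by
  obtain ⟨hh, hc⟩ := h
  cases w with
  | nil => simp
  | cons a t =>
    simp only [List.head?_cons, Option.some.injEq] at hh
    subst hh
    exact chain'_all Q hstep t _ hv hc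

lemma mem_of_getLast?_some {α : Type*} {l : List α} {a : α} (h : l.getLast? = some a) :
    a ∈ l := by
  obtain ⟨hne, rfl⟩ := List.mem_getLast?_eq_getLast (Option.mem_def.mpr h)
  exact List.getLast_mem _

/-- The sub-arena induced by restricting moves to those landing in `Inv`. -/
def restrict (A : GameArena P) (Inv : P → Prop) : GameArena P where
  turn := A.turn
  edge p q := A.edge p q ∧ Inv q
  win := A.win

lemma restrict_walk {A : GameArena P} {Inv : P → Prop} {v : P} {w : List P}
    (h : (A.restrict Inv).IsWalkFrom v w) : A.IsWalkFrom v w :=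
  ⟨h.1, h.2.imp fun _ _ e => e.1⟩

lemma restrict_all_inv {A : GameArena P} {Inv : P → Prop} {v : P} {w : List P}
    (hv : Inv v) (h : (A.restrict Inv).IsWalkFrom v w) : ∀ p ∈ w, Inv p :=
  walk_all (A := A.restrict Inv) Inv h hv (fun _ _ _ e => e.2)

/-- If a winning strategy stays inside `Inv` (on `Inv`-walks), it remains
winning in the restricted arena. -/
theorem WinningStrategy.restrict {A : GameArena P} {pl : Player} {v : P} {σ : List P → P}
    {Inv : P → Prop} (hv : Inv v)
    (hstep : ∀ p, Inv p → (∃ q, A.edge p q) → ∃ q, A.edge p q ∧ Inv q)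
    (hhull : ∀ w, A.IsWalkFrom v w → (∀ p ∈ w, Inv p) → Inv (σ w))
    (hσ : A.WinningStrategy pl v σ) : (A.restrict Inv).WinningStrategy pl v σ := by
  obtain ⟨hleg, hfin, hinf⟩ := hσ
  refine ⟨?_, ?_, ?_⟩
  · intro w u hw hlast hturn hex
    have hwA := restrict_walk hw
    have hall := restrict_all_inv hv hw
    obtain ⟨x, hx⟩ := hex
    exact ⟨hleg w u hwA hlast hturn ⟨x, hx.1⟩, hhull w hwA hall⟩
  · intro w hplay hfol
    have hwA := restrict_walk hplay.1
    have hall := restrict_all_inv hv hplay.1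
    have hplayA : A.IsFinitePlay v w := by
      refine ⟨hwA, fun u hu q hq => ?_⟩
      have hInvu : Inv u := hall u (mem_of_getLast?_some hu)
      obtain ⟨q2, hq2, hi2⟩ := hstep u hInvu ⟨q, hq⟩
      exact hplay.2 u hu q2 ⟨hq2, hi2⟩
    exact hfin w hplayA hfol
  · intro f hf hfol
    exact hinf f ⟨hf.1, fun n => (hf.2 n).1⟩ hfol

end GameArena


namespace Bisim

open Classical in
noncomputable section

variable {P : Type u} {P' : Type v}
variable (A : GameArena P) (A' : GameArena P') (pl : Player)
variable (R : P' → P → Prop) (v : P) (v' : P') (σ : List P → P)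

/-- Lift of a small-side move along the bisimulation (with junk default). -/
noncomputable def F (p : P) (q' : P') : P :=
  if h : ∃ q, A.edge p q ∧ R q' q then h.choose else v

lemma F_spec {p : P} {q' : P'} (h : ∃ q, A.edge p q ∧ R q' q) :
    A.edge p (F A R v p q') ∧ R q' (F A R v p q') := by
  rw [F, dif_pos h]; exact h.choose_spec

/-- Pull-back of a big-side move along the bisimulation (with legal default). -/
noncomputable def G (p' : P') (q : P) : P' :=
  if h : ∃ q', A'.edge p' q' ∧ R q' q then h.choose
  else if h2 : ∃ r', A'.edge p' r' then h2.choose else v'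

lemma G_spec {p' : P'} {q : P} (h : ∃ q', A'.edge p' q' ∧ R q' q) :
    A'.edge p' (G A' R v' p' q) ∧ R (G A' R v' p' q) q := by
  rw [G, dif_pos h]; exact h.choose_spec

lemma G_edge {p' : P'} {q : P} (hex : ∃ r', A'.edge p' r') :
    A'.edge p' (G A' R v' p' q) := by
  by_cases h : ∃ q', A'.edge p' q' ∧ R q' q
  · rw [G, dif_pos h]; exact h.choose_spec.1
  · rw [G, dif_neg h, dif_pos hex]; exact hex.choose_spec

/-- The lift of a (reversed) small-side history to a big-side history,
following `σ` at `pl`'s own positions and `F` at the opponent's. -/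
noncomputable def liftRev : List P' → List P
  | [] => []
  | [_] => [v]
  | x' :: sm :: rest =>
      let lr := liftRev (sm :: rest)
      let p := lr.head?.getD v
      (if A.turn p = pl then σ lr.reverse else F A R v p x') :: lr

noncomputable def lift (w' : List P') : List P := (liftRev A pl R v σ w'.reverse).reverse

lemma liftRev_ne_nil (x' : P') (rest : List P') : liftRev A pl R v σ (x' :: rest) ≠ [] := by
  cases rest <;> simp [liftRev]

lemma lift_nil : lift A pl R v σ [] = [] := rfl

lemma lift_ne_nil {w' : List P'} (h : w' ≠ []) : lift A pl R v σ w' ≠ [] := by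
  obtain ⟨x', rest, hx⟩ := List.exists_cons_of_ne_nil (by simpa using h : w'.reverse ≠ [])
  unfold lift
  rw [hx]
  simpa using liftRev_ne_nil A pl R v σ x' rest

lemma lift_singleton (x' : P') : lift A pl R v σ [x'] = [v] := by
  simp [lift, liftRev]

/-- The element appended by `lift` when the history is extended. -/
noncomputable def liftNext (u' : List P') (x' : P') : P :=
  let p := ((lift A pl R v σ u').getLast?).getD v
  if A.turn p = pl then σ (lift A pl R v σ u') else F A R v p x'

lemma lift_concat (u' : List P') (x' : P') (hu : u' ≠ []) :
    lift A pl R v σ (u' ++ [x']) =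
      lift A pl R v σ u' ++ [liftNext A pl R v σ u' x'] := by
  obtain ⟨sm, rest, hrev⟩ := List.exists_cons_of_ne_nil (by simpa using hu : u'.reverse ≠ [])
  have hrev2 : (u' ++ [x']).reverse = x' :: sm :: rest := by simp [hrev]
  have hlr : liftRev A pl R v σ (x' :: sm :: rest) =
      (let lr := liftRev A pl R v σ (sm :: rest)
       let p := lr.head?.getD v
       (if A.turn p = pl then σ lr.reverse else F A R v p x') :: lr) := rfl
  have hlift : lift A pl R v σ u' = (liftRev A pl R v σ (sm :: rest)).reverse := by
    unfold lift; rw [hrev]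
  have hhead : (liftRev A pl R v σ (sm :: rest)).head?.getD v
      = ((lift A pl R v σ u').getLast?).getD v := by
    rw [hlift, List.getLast?_reverse]
  unfold lift
  rw [hrev2, hlr]
  simp only []
  rw [List.reverse_cons, ← hlift, hhead]
  unfold liftNext
  rw [hlift, hrev]

/-- The transferred strategy. -/
noncomputable def sig (w' : List P') : P' :=
  G A' R v' (w'.getLast?.getD v') (σ (lift A pl R v σ w'))

end

variable {P : Type u} {P' : Type v}
variable {A : GameArena P} {A' : GameArena P'} {pl : Player}
variable {R : P' → P → Prop} {v : P} {v' : P'} {σ : List P → P}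

lemma head?_append_left {α : Type*} {l t : List α} {a : α} (h : l.head? = some a) :
    (l ++ t).head? = some a := by
  rw [List.head?_append, h]; rfl

lemma walk_prefix {t u' : List P'} (hw : A'.IsWalkFrom v' (u' ++ t)) (hu : u' ≠ []) :
    A'.IsWalkFrom v' u' := by
  refine ⟨?_, (List.isChain_append.mp hw.2).1⟩
  have h0 : u'.head? = some (u'.head hu) := List.head?_eq_head hu
  have h1 := hw.1
  rw [List.head?_append, h0] at h1
  rw [h0]
  exact h1

lemma follows_prefix {s : List P' → P'} {t u' : List P'}
    (hf : A'.FollowsFin pl s (u' ++ t)) : A'.FollowsFin pl s u' :=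
  fun q u x hpre hlq ht => hf q u x (hpre.trans (List.prefix_append _ _)) hlq ht

lemma forall₂_getLast? {l : List P'} {l₂ : List P} {a : P'}
    (hF : List.Forall₂ R l l₂) (hlast : l.getLast? = some a) :
    ∃ b, l₂.getLast? = some b ∧ R a b := by
  induction hF with
  | nil => simp at hlast
  | @cons a' b l1 l2 hab htail ih =>
    cases l1 with
    | nil =>
      have : l2 = [] := List.forall₂_nil_left_iff.mp htail
      subst this
      simp only [List.getLast?_singleton, Option.some.injEq] at hlast
      subst hlast
      exact ⟨b, by simp, hab⟩
    | cons c l1' =>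
      rw [List.getLast?_cons_cons] at hlast
      obtain ⟨d, l2', rfl⟩ : ∃ d l2', l2 = d :: l2' := by
        cases l2 with
        | nil => exact absurd htail (by simp [List.forall₂_nil_right_iff])
        | cons d l2' => exact ⟨d, l2', rfl⟩
      obtain ⟨bb, hbb, hRbb⟩ := ih hlast
      exact ⟨bb, by rw [List.getLast?_cons_cons]; exact hbb, hRbb⟩

lemma snoc_eq_snoc {l₁ l₂ : List P} {a b : P} (h : l₁ ++ [a] = l₂ ++ [b]) :
    l₁ = l₂ ∧ a = b := by
  have := List.concat_inj.mp (by simpa [List.concat_eq_append] using h)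
  exact this

theorem main (hv : R v' v)
    (hturn : ∀ p' p, R p' p → A'.turn p' = A.turn p)
    (hforth : ∀ p' p q', R p' p → A'.edge p' q' → ∃ q, A.edge p q ∧ R q' q)
    (hback : ∀ p' p q, R p' p → A.edge p q → ∃ q', A'.edge p' q' ∧ R q' q)
    (hleg : A.LegalFor pl v σ) :
    ∀ w', A'.IsWalkFrom v' w' → A'.FollowsFin pl (sig A A' pl R v v' σ) w' →
      A.IsWalkFrom v (lift A pl R v σ w') ∧ A.FollowsFin pl σ (lift A pl R v σ w') ∧
      List.Forall₂ R w' (lift A pl R v σ w') := by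
  intro w'
  induction w' using List.reverseRecOn with
  | nil => intro hw _; exact absurd hw.1 (by simp)
  | append_singleton u' x' ih =>
    intro hw hfol
    by_cases hu : u' = []
    · subst hu
      have hx : x' = v' := by simpa using hw.1
      subst hx
      rw [List.nil_append, lift_singleton]
      refine ⟨⟨by simp, by simp [List.Chain']⟩, ?_, List.Forall₂.cons hv List.Forall₂.nil⟩
      intro q u x hpre hlq _
      have h1 : q ≠ [] := by rintro rfl; simp at hlq
      have h2 : 0 < q.length := List.length_pos_iff.mpr h1
      have h3 := hpre.length_le
      simp only [List.length_append, List.length_singleton] at h3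
      exact absurd h2 (by omega)
    · have hwu : A'.IsWalkFrom v' u' := walk_prefix hw hu
      have hfolu : A'.FollowsFin pl (sig A A' pl R v v' σ) u' := follows_prefix hfol
      obtain ⟨hwl, hfl, hral⟩ := ih hwu hfolu
      obtain ⟨p', hlastu'⟩ : ∃ p', u'.getLast? = some p' := by
        rw [List.getLast?_eq_getLast hu]; exact ⟨_, rfl⟩
      obtain ⟨p, hlastl, hRp⟩ := forall₂_getLast? hral hlastu'
      have hedge' : A'.edge p' x' := by
        have := (List.isChain_append.mp hw.2).2.2
        exact this p' hlastu' x' rfl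
      have hlifteq := lift_concat A pl R v σ u' x' hu
      have hheadne : lift A pl R v σ u' ≠ [] := lift_ne_nil A pl R v σ hu
      by_cases hT : A.turn p = pl
      · -- the player's own move
        have hexA : ∃ q, A.edge p q := by
          obtain ⟨q, hq, _⟩ := hforth p' p x' hRp hedge'; exact ⟨q, hq⟩
        have hO : A.edge p (σ (lift A pl R v σ u')) := hleg _ p hwl hlastl hT hexA
        have hxeq : x' = sig A A' pl R v v' σ u' :=
          hfol u' p' x' (List.prefix_refl _) hlastu' (by rw [hturn p' p hRp]; exact hT)
        have hGsp := G_spec A' R v' (p' := p') (q := σ (lift A pl R v σ u'))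
          (hback p' p _ hRp hO)
        have hsig : sig A A' pl R v v' σ u' = G A' R v' p' (σ (lift A pl R v σ u')) := by
          unfold sig; rw [hlastu']; rfl
        have hRx : R x' (σ (lift A pl R v σ u')) := by
          rw [hxeq, hsig]; exact hGsp.2
        have hnext : liftNext A pl R v σ u' x' = σ (lift A pl R v σ u') := by
          unfold liftNext; rw [hlastl]; simp [hT]
        rw [hlifteq, hnext]
        refine ⟨⟨?_, ?_⟩, ?_, ?_⟩
        · exact head?_append_left hwl.1
        · refine List.isChain_append.mpr ⟨hwl.2, by simp, ?_⟩
          intro x hx y hy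
          rw [hlastl] at hx
          cases hx
          simp only [List.head?_cons, Option.mem_def, Option.some.injEq] at hy
          subst hy
          exact hO
        · intro q u x hpre hlq hturn2
          rcases List.prefix_concat_iff.mp hpre with heq | hpre2
          · obtain ⟨rfl, rfl⟩ := snoc_eq_snoc heq
            rfl
          · exact hfl q u x hpre2 hlq hturn2
        · exact List.rel_append hral (List.Forall₂.cons hRx List.Forall₂.nil)
      · -- the opponent's move
        have hFsp := F_spec A R v (p := p) (q' := x') (hforth p' p x' hRp hedge')
        have hnext : liftNext A pl R v σ u' x' = F A R v p x' := by
          unfold liftNext; rw [hlastl]; simp [hT]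
        rw [hlifteq, hnext]
        refine ⟨⟨?_, ?_⟩, ?_, ?_⟩
        · exact head?_append_left hwl.1
        · refine List.isChain_append.mpr ⟨hwl.2, by simp, ?_⟩
          intro x hx y hy
          rw [hlastl] at hx
          cases hx
          simp only [List.head?_cons, Option.mem_def, Option.some.injEq] at hy
          subst hy
          exact hFsp.1
        · intro q u x hpre hlq hturn2
          rcases List.prefix_concat_iff.mp hpre with heq | hpre2
          · obtain ⟨rfl, rfl⟩ := snoc_eq_snoc heq
            rw [hlq] at hlastl
            cases hlastl
            exact absurd hturn2 hT
          · exact hfl q u x hpre2 hlq hturn2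
        · exact List.rel_append hral (List.Forall₂.cons hFsp.2 List.Forall₂.nil)

lemma getLast?_of_ne_nil {α : Type*} {l : List α} (h : l ≠ []) : ∃ a, l.getLast? = some a := by
  rw [List.getLast?_eq_getLast h]; exact ⟨_, rfl⟩

theorem transfer (hv : R v' v)
    (hturn : ∀ p' p, R p' p → A'.turn p' = A.turn p)
    (hwin : ∀ p' p, R p' p → ∀ q, A'.win p' q ↔ A.win p q)
    (hforth : ∀ p' p q', R p' p → A'.edge p' q' → ∃ q, A.edge p q ∧ R q' q)
    (hback : ∀ p' p q, R p' p → A.edge p q → ∃ q', A'.edge p' q' ∧ R q' q)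
    (h : A.HasWinningStrategy pl v) : A'.HasWinningStrategy pl v' := by
  obtain ⟨σ, hleg, hfin, hinf⟩ := h
  refine ⟨sig A A' pl R v v' σ, ?_, ?_, ?_⟩
  · -- legality
    intro w' u' hw hlast hturn' hex
    have hs : sig A A' pl R v v' σ w' = G A' R v' u' (σ (lift A pl R v σ w')) := by
      unfold sig; rw [hlast]; rfl
    rw [hs]
    exact G_edge A' R v' hex
  · -- finite plays
    intro w' hplay hfol
    obtain ⟨hwl, hfl, hral⟩ := main hv hturn hforth hback hleg w' hplay.1 hfol
    have hne : w' ≠ [] := by rintro rfl; exact absurd hplay.1.1 (by simp)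
    obtain ⟨u', hlast'⟩ := getLast?_of_ne_nil hne
    obtain ⟨u, hlastl, hR⟩ := forall₂_getLast? hral hlast'
    have hdead : A.DeadEnd u := by
      intro q hq
      obtain ⟨q', hq', _⟩ := hback u' u q hR hq
      exact hplay.2 u' hlast' q' hq'
    obtain ⟨u2, hl2, hwin2⟩ := hfin (lift A pl R v σ w')
      ⟨hwl, fun z hz => by rw [hlastl] at hz; cases hz; exact hdead⟩ hfl
    rw [hlastl] at hl2
    cases hl2
    exact ⟨u', hlast', (hwin u' u hR pl).mpr hwin2⟩
  · -- infinite plays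
    intro f' hf' hfol'
    set w'n : ℕ → List P' := fun n => List.ofFn fun i : Fin (n + 1) => f' i with hw'n
    have i1 : ∀ n, w'n (n + 1) = w'n n ++ [f' (n + 1)] := by
      intro n
      show (List.ofFn fun i : Fin (n + 2) => f' i)
          = (List.ofFn fun i : Fin (n + 1) => f' i) ++ [f' (n + 1)]
      rw [List.ofFn_succ' (fun i : Fin (n + 2) => f' i)]
      simp [List.concat_eq_append]
    have i2 : ∀ n, (w'n n).getLast? = some (f' n) := by
      intro n
      cases n with
      | zero => simp [hw'n]
      | succ m => rw [i1 m, List.getLast?_concat]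
    have i3 : ∀ n, w'n n ≠ [] := by
      intro n h
      have := i2 n
      rw [h] at this
      simp at this
    have i4 : ∀ n, A'.IsWalkFrom v' (w'n n) := by
      intro n
      induction n with
      | zero => exact ⟨by simp [hw'n, hf'.1], by simp [hw'n, List.Chain']⟩
      | succ m ihm =>
        rw [i1 m]
        refine ⟨head?_append_left ihm.1, List.isChain_append.mpr ⟨ihm.2, by simp, ?_⟩⟩
        intro x hx y hy
        rw [i2 m] at hx
        cases hx
        simp only [List.head?_cons, Option.mem_def, Option.some.injEq] at hy
        subst hy
        exact hf'.2 m
    have i5 : ∀ m n, m ≤ n → w'n m <+: w'n n := by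
      intro m n hmn
      induction n with
      | zero => cases Nat.le_zero.mp hmn; exact List.prefix_refl _
      | succ k ihk =>
        rcases Nat.lt_or_ge m (k + 1) with hlt | hge
        · exact (ihk (Nat.lt_succ_iff.mp hlt)).trans (by rw [i1 k]; exact List.prefix_append _ _)
        · have : m = k + 1 := le_antisymm hmn hge
          subst this
          exact List.prefix_refl _
    have i6 : ∀ n, A'.FollowsFin pl (sig A A' pl R v v' σ) (w'n n) := by
      intro n q u x hpre hlq hturnq
      have hqne : q ≠ [] := by rintro rfl; simp at hlq
      have hlen : (q ++ [x]).length = q.length + 1 := by simp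
      have hlen2 : q.length + 1 ≤ n + 1 := by
        have := hpre.length_le
        simpa [hw'n] using this
      obtain ⟨k, hk⟩ : ∃ k, q.length = k + 1 :=
        ⟨q.length - 1, by have := List.length_pos_iff.mpr hqne; omega⟩
      have hqx : q ++ [x] = w'n (k + 1) := by
        have h1 : q ++ [x] <+: w'n n := hpre
        have h2 : w'n (k + 1) <+: w'n n := i5 _ _ (by omega)
        have e1 := List.prefix_iff_eq_take.mp h1
        have e2 := List.prefix_iff_eq_take.mp h2
        rw [e1, e2]
        congr 1
        simp [hw'n, hk]
      rw [i1 k] at hqx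
      obtain ⟨rfl, rfl⟩ := snoc_eq_snoc hqx
      have h9 : f' k = u := Option.some.inj (by rw [← i2 k]; exact hlq)
      subst h9
      exact hfol' k hturnq
    have main' := fun n => main hv hturn hforth hback hleg (w'n n) (i4 n) (i6 n)
    set fB : ℕ → P := fun n => ((lift A pl R v σ (w'n n)).getLast?).getD v with hfB
    have j0 : lift A pl R v σ (w'n 0) = [v] := by
      have : w'n 0 = [f' 0] := by simp [hw'n]
      rw [this, lift_singleton]
    have j1 : ∀ n, lift A pl R v σ (w'n (n + 1)) =
        lift A pl R v σ (w'n n) ++ [liftNext A pl R v σ (w'n n) (f' (n + 1))] := by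
      intro n
      rw [i1 n]
      exact lift_concat A pl R v σ _ _ (i3 n)
    have j2 : ∀ n, fB (n + 1) = liftNext A pl R v σ (w'n n) (f' (n + 1)) := by
      intro n
      rw [hfB]
      simp only []
      rw [j1 n, List.getLast?_concat]
      rfl
    have j3 : ∀ n, (lift A pl R v σ (w'n n)).getLast? = some (fB n) := by
      intro n
      cases n with
      | zero => rw [j0]; rfl
      | succ m => rw [j1 m, List.getLast?_concat, j2 m]
    have j5 : ∀ n, (List.ofFn fun i : Fin (n + 1) => fB i) = lift A pl R v σ (w'n n) := by
      intro n
      induction n with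
      | zero =>
        have hfb0 : fB 0 = v := by rw [hfB]; simp only []; rw [j0]; rfl
        rw [j0]
        simp [hfb0]
      | succ m ihm =>
        rw [List.ofFn_succ' (fun i : Fin (m + 2) => fB i)]
        simp only [List.concat_eq_append, Fin.coe_castSucc, Fin.val_last]
        rw [j1 m, ← j2 m, ihm]
    have j4 : A.IsInfPlay v fB := by
      refine ⟨by rw [hfB]; simp only []; rw [j0]; rfl, ?_⟩
      intro n
      have hwalk := (main' (n + 1)).1
      have hchain := hwalk.2
      rw [j1 n] at hchain
      have := (List.isChain_append.mp hchain).2.2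
      have he := this (fB n) (j3 n) (liftNext A pl R v σ (w'n n) (f' (n + 1))) rfl
      rw [← j2 n] at he
      exact he
    have j6 : A.FollowsInf pl σ fB := by
      intro n hturnB
      rw [j2 n]
      unfold liftNext
      rw [j3 n]
      simp only [Option.getD_some]
      rw [if_pos hturnB, j5 n]
    exact hinf fB j4 j6

end Bisim


lemma countable_list_mem {α : Type*} {S : Set α} (h : S.Countable) :
    {l : List α | ∀ x ∈ l, x ∈ S}.Countable := by
  have : Countable ↑S := h.to_subtype
  rw [← Set.countable_coe_iff]
  refine Function.Injective.countable (β := List ↑S)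
    (f := fun l => l.1.pmap (fun x hx => (⟨x, hx⟩ : ↑S)) l.2) ?_
  rintro ⟨l1, h1⟩ ⟨l2, h2⟩ he
  have : l1 = l2 := by
    have := congrArg (List.map Subtype.val) he
    simpa [List.map_pmap] using this
  subst this; rfl

/-- Generic countable Skolem-hull construction for a strategy `σ`:
there is a countable set `B` of "data" closed under the values extracted
(via `val`) from `σ`'s responses to histories with data inside `B`. -/
theorem hull_exists {P : Type u} {D : Type w} (A : GameArena P) (v : P)
    (σ : List P → P) (val : P → Set D) (b₀ : D) (Reach : P → Prop)
    (hRv : Reach v)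
    (hRstep : ∀ p q, Reach p → A.edge p q → Reach q)
    (hfin : ∀ p, (val p).Finite)
    (hcnt : ∀ C : Set D, C.Countable → {p | Reach p ∧ val p ⊆ C}.Countable) :
    ∃ B : Set D, B.Countable ∧ b₀ ∈ B ∧ val v ⊆ B ∧
      ∀ w, A.IsWalkFrom v w → (∀ p ∈ w, val p ⊆ B) → val (σ w) ⊆ B := by
  classical
  let E : ℕ → Set D := fun k =>
    Nat.rec ({b₀} ∪ val v)
      (fun _ Ek => Ek ∪ ⋃ w ∈ {w : List P | A.IsWalkFrom v w ∧ ∀ p ∈ w, val p ⊆ Ek},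
        val (σ w)) k
  have hWsub : ∀ C : Set D, {w : List P | A.IsWalkFrom v w ∧ ∀ p ∈ w, val p ⊆ C} ⊆
      {l : List P | ∀ x ∈ l, x ∈ {p | Reach p ∧ val p ⊆ C}} := by
    intro C w hw p hp
    exact ⟨GameArena.walk_all Reach hw.1 hRv hRstep p hp, hw.2 p hp⟩
  have hWcnt : ∀ C : Set D, C.Countable →
      {w : List P | A.IsWalkFrom v w ∧ ∀ p ∈ w, val p ⊆ C}.Countable :=
    fun C hC => (countable_list_mem (hcnt C hC)).mono (hWsub C)
  have hEcnt : ∀ k, (E k).Countable := by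
    intro k
    induction k with
    | zero => exact (Set.countable_singleton b₀).union (hfin v).countable
    | succ m ihm =>
      refine ihm.union (Set.Countable.biUnion (hWcnt _ ihm) ?_)
      intro w _
      exact (hfin (σ w)).countable
  have hmono : ∀ k l, k ≤ l → E k ⊆ E l := by
    intro k l hkl
    induction l with
    | zero => cases Nat.le_zero.mp hkl; exact subset_rfl
    | succ m ihm =>
      rcases Nat.lt_or_ge k (m + 1) with hlt | hge
      · exact (ihm (Nat.lt_succ_iff.mp hlt)).trans Set.subset_union_left
      · have : k = m + 1 := le_antisymm hkl hge
        subst this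
        exact subset_rfl
  refine ⟨⋃ k, E k, Set.countable_iUnion hEcnt, ?_, ?_, ?_⟩
  · exact Set.mem_iUnion.mpr ⟨0, Or.inl rfl⟩
  · exact Set.subset_iUnion_of_subset 0 Set.subset_union_right
  · intro w hw hval
    have hone : ∀ s : Set D, s.Finite → s ⊆ (⋃ k, E k) → ∃ k, s ⊆ E k := by
      intro s hs
      refine Set.Finite.induction_on (motive := fun s _ => s ⊆ (⋃ k, E k) → ∃ k, s ⊆ E k) s hs
        (fun _ => ⟨0, Set.empty_subset _⟩) ?_
      intro a t _ _ iht hsub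
      obtain ⟨ka, hka⟩ := Set.mem_iUnion.mp (hsub (Set.mem_insert a t))
      obtain ⟨kt, hkt⟩ := iht fun x hx => hsub (Set.mem_insert_of_mem a hx)
      exact ⟨max ka kt, Set.insert_subset (hmono ka _ (le_max_left _ _) hka)
        (hkt.trans (hmono kt _ (le_max_right _ _)))⟩
    have hlist : ∀ l : List P, (∀ p ∈ l, val p ⊆ (⋃ k, E k)) →
        ∃ k, ∀ p ∈ l, val p ⊆ E k := by
      intro l
      induction l with
      | nil => exact fun _ => ⟨0, by simp⟩
      | cons a t iht =>
        intro hl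
        obtain ⟨ka, hka⟩ := hone (val a) (hfin a) (hl a List.mem_cons_self)
        obtain ⟨kt, hkt⟩ := iht fun p hp => hl p (List.mem_cons_of_mem a hp)
        refine ⟨max ka kt, ?_⟩
        intro p hp
        rcases List.mem_cons.mp hp with rfl | hp
        · exact hka.trans (hmono ka _ (le_max_left _ _))
        · exact (hkt p hp).trans (hmono kt _ (le_max_right _ _))
    obtain ⟨k, hk⟩ := hlist w hval
    have hwk : w ∈ {w : List P | A.IsWalkFrom v w ∧ ∀ p ∈ w, val p ⊆ E k} := ⟨hw, hk⟩
    have : val (σ w) ⊆ E (k + 1) := by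
      refine Set.subset_union_of_subset_right ?_ _
      exact Set.subset_biUnion_of_mem (u := fun w => val (σ w)) hwk
    exact this.trans (Set.subset_iUnion_of_subset (k + 1) subset_rfl)



/-! ### Subformulas -/

namespace SCLFormula

variable {V : Vocab}

/-- `Subf ψ φ`: `ψ` is a subformula of `φ`. -/
inductive Subf : SCLFormula V → SCLFormula V → Prop
  | refl (φ : SCLFormula V) : Subf φ φ
  | notS {ψ φ : SCLFormula V} : Subf ψ φ → Subf ψ (.not φ)
  | andL {ψ φ₁ φ₂ : SCLFormula V} : Subf ψ φ₁ → Subf ψ (.and φ₁ φ₂)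
  | andR {ψ φ₁ φ₂ : SCLFormula V} : Subf ψ φ₂ → Subf ψ (.and φ₁ φ₂)
  | orL {ψ φ₁ φ₂ : SCLFormula V} : Subf ψ φ₁ → Subf ψ (.or φ₁ φ₂)
  | orR {ψ φ₁ φ₂ : SCLFormula V} : Subf ψ φ₂ → Subf ψ (.or φ₁ φ₂)
  | exS {ψ φ : SCLFormula V} {x : ℕ} : Subf ψ φ → Subf ψ (.ex x φ)
  | allS {ψ φ : SCLFormula V} {x : ℕ} : Subf ψ φ → Subf ψ (.all x φ)
  | labS {ψ φ : SCLFormula V} {L : ℕ} : Subf ψ φ → Subf ψ (.lab L φ)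

theorem Subf.trans {ψ χ φ : SCLFormula V} (h1 : Subf ψ χ) (h2 : Subf χ φ) : Subf ψ φ := by
  induction h2 with
  | refl => exact h1
  | notS _ ih => exact .notS ih
  | andL _ ih => exact .andL ih
  | andR _ ih => exact .andR ih
  | orL _ ih => exact .orL ih
  | orR _ ih => exact .orR ih
  | exS _ ih => exact .exS ih
  | allS _ ih => exact .allS ih
  | labS _ ih => exact .labS ih

/-- The label symbols occurring in a formula. -/
def labels : SCLFormula V → Finset ℕ
  | .bot => ∅
  | .eq _ _ => ∅
  | .rel _ _ => ∅
  | .claim _ => ∅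
  | .not φ => labels φ
  | .and φ ψ => labels φ ∪ labels ψ
  | .or φ ψ => labels φ ∪ labels ψ
  | .ex _ φ => labels φ
  | .all _ φ => labels φ
  | .lab L φ => insert L (labels φ)

theorem vars_mono {ψ φ : SCLFormula V} (h : Subf ψ φ) : ψ.vars ⊆ φ.vars := by
  induction h with
  | refl => exact subset_rfl
  | notS _ ih => exact ih
  | andL _ ih => exact ih.trans (by simp [vars])
  | andR _ ih => exact ih.trans (by simp [vars])
  | orL _ ih => exact ih.trans (by simp [vars])
  | orR _ ih => exact ih.trans (by simp [vars])
  | exS _ ih => exact ih.trans (by simp [vars, Finset.subset_insert])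
  | allS _ ih => exact ih.trans (by simp [vars, Finset.subset_insert])
  | labS _ ih => exact ih

theorem labels_mono {ψ φ : SCLFormula V} (h : Subf ψ φ) : ψ.labels ⊆ φ.labels := by
  induction h with
  | refl => exact subset_rfl
  | notS _ ih => exact ih
  | andL _ ih => exact ih.trans (by simp [labels])
  | andR _ ih => exact ih.trans (by simp [labels])
  | orL _ ih => exact ih.trans (by simp [labels])
  | orR _ ih => exact ih.trans (by simp [labels])
  | exS _ ih => exact ih
  | allS _ ih => exact ih
  | labS _ ih => exact ih.trans (by simp [labels, Finset.subset_insert])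

theorem mem_labels_lab {L : ℕ} {ψ φ : SCLFormula V} (h : Subf (.lab L ψ) φ) :
    L ∈ φ.labels :=
  labels_mono h (by simp [labels])

theorem mem_vars_ex {x : ℕ} {ψ φ : SCLFormula V} (h : Subf (.ex x ψ) φ) : x ∈ φ.vars :=
  vars_mono h (by simp [vars])

theorem mem_vars_all {x : ℕ} {ψ φ : SCLFormula V} (h : Subf (.all x ψ) φ) : x ∈ φ.vars :=
  vars_mono h (by simp [vars])

theorem freeVars_subset_vars : ∀ ψ : SCLFormula V, ψ.freeVars ⊆ ψ.vars := by
  intro ψ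
  induction ψ with
  | bot => exact subset_rfl
  | eq x y => exact subset_rfl
  | rel R a => exact subset_rfl
  | claim L => exact subset_rfl
  | not ψ ih => exact ih
  | and ψ χ ih1 ih2 =>
    exact Finset.union_subset (ih1.trans (by simp [vars])) (ih2.trans (by simp [vars]))
  | or ψ χ ih1 ih2 =>
    exact Finset.union_subset (ih1.trans (by simp [vars])) (ih2.trans (by simp [vars]))
  | ex x ψ ih =>
    exact (Finset.sdiff_subset).trans (ih.trans (Finset.subset_insert _ _))
  | all x ψ ih =>
    exact (Finset.sdiff_subset).trans (ih.trans (Finset.subset_insert _ _))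
  | lab L ψ ih => exact ih

theorem subf_finite : ∀ φ : SCLFormula V, {ψ : SCLFormula V | Subf ψ φ}.Finite := by
  intro φ
  induction φ with
  | bot => exact (Set.finite_singleton _).subset (by rintro ψ h; cases h; rfl)
  | eq x y => exact (Set.finite_singleton _).subset (by rintro ψ h; cases h; rfl)
  | rel R a => exact (Set.finite_singleton _).subset (by rintro ψ h; cases h; rfl)
  | claim L => exact (Set.finite_singleton _).subset (by rintro ψ h; cases h; rfl)
  | not ψ ih =>
    refine ((ih.insert (SCLFormula.not ψ)).subset ?_)
    rintro χ h
    cases h with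
    | refl => exact Set.mem_insert _ _
    | notS h => exact Set.mem_insert_of_mem _ h
  | and ψ χ ih1 ih2 =>
    refine (((ih1.union ih2).insert (SCLFormula.and ψ χ)).subset ?_)
    rintro ξ h
    cases h with
    | refl => exact Set.mem_insert _ _
    | andL h => exact Set.mem_insert_of_mem _ (Or.inl h)
    | andR h => exact Set.mem_insert_of_mem _ (Or.inr h)
  | or ψ χ ih1 ih2 =>
    refine (((ih1.union ih2).insert (SCLFormula.or ψ χ)).subset ?_)
    rintro ξ h
    cases h with
    | refl => exact Set.mem_insert _ _
    | orL h => exact Set.mem_insert_of_mem _ (Or.inl h)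
    | orR h => exact Set.mem_insert_of_mem _ (Or.inr h)
  | ex x ψ ih =>
    refine ((ih.insert (SCLFormula.ex x ψ)).subset ?_)
    rintro χ h
    cases h with
    | refl => exact Set.mem_insert _ _
    | exS h => exact Set.mem_insert_of_mem _ h
  | all x ψ ih =>
    refine ((ih.insert (SCLFormula.all x ψ)).subset ?_)
    rintro χ h
    cases h with
    | refl => exact Set.mem_insert _ _
    | allS h => exact Set.mem_insert_of_mem _ h
  | lab L ψ ih =>
    refine ((ih.insert (SCLFormula.lab L ψ)).subset ?_)
    rintro χ h
    cases h with
    | refl => exact Set.mem_insert _ _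
    | labS h => exact Set.mem_insert_of_mem _ h

end SCLFormula


/-! ### Position invariants and countability -/

section Positions

open SCLFormula

variable {V : Vocab} (M : Struct.{u} V) (φ : SCLFormula V) (b₀ : M.Dom)

/-- Invariant satisfied by all positions reachable in the evaluation games
starting from `initPos φ (fun _ => b₀)`. -/
def Qpos (p : SCLPos V M.Dom) : Prop :=
  Subf p.form φ ∧ (∀ L χ, p.env L = some χ → Subf χ φ) ∧
  (∀ L, p.env L ≠ none → L ∈ φ.labels) ∧ (∀ x, x ∉ φ.vars → p.asg x = b₀)

lemma Qpos_init : Qpos M φ b₀ (initPos φ (fun _ => b₀)) := by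
  refine ⟨Subf.refl φ, ?_, ?_, fun _ _ => rfl⟩
  · intro L χ h
    simp [initPos] at h
  · intro L h
    simp [initPos] at h

lemma update_eq_some_cases {β : Type*} (e : ℕ → Option β) (L L' : ℕ) (v : β) (χ : β)
    (h : Function.update e L (some v) L' = some χ) :
    (L' = L ∧ χ = v) ∨ (L' ≠ L ∧ e L' = some χ) := by
  by_cases hL : L' = L
  · subst hL
    rw [Function.update_self] at h
    exact Or.inl ⟨rfl, (Option.some.inj h).symm⟩
  · rw [Function.update_of_ne hL] at h
    exact Or.inr ⟨hL, h⟩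

lemma Qpos_step {p q : SCLPos V M.Dom} (hp : Qpos M φ b₀ p) (h : UStep M p q) :
    Qpos M φ b₀ q := by
  obtain ⟨h1, h2, h3, h4⟩ := hp
  cases h with
  | neg ψ e s b =>
    exact ⟨Subf.trans (Subf.notS (Subf.refl ψ)) h1, h2, h3, h4⟩
  | andLeft φ₁ φ₂ e s b =>
    exact ⟨Subf.trans (Subf.andL (Subf.refl _)) h1, h2, h3, h4⟩
  | andRight φ₁ φ₂ e s b =>
    exact ⟨Subf.trans (Subf.andR (Subf.refl _)) h1, h2, h3, h4⟩
  | orLeft φ₁ φ₂ e s b =>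
    exact ⟨Subf.trans (Subf.orL (Subf.refl _)) h1, h2, h3, h4⟩
  | orRight φ₁ φ₂ e s b =>
    exact ⟨Subf.trans (Subf.orR (Subf.refl _)) h1, h2, h3, h4⟩
  | exStep x ψ e s b a =>
    refine ⟨Subf.trans (Subf.exS (Subf.refl _)) h1, h2, h3, ?_⟩
    intro y hy
    have hx : x ∈ φ.vars := mem_vars_ex h1
    show Function.update s x a y = b₀
    rw [Function.update_of_ne (fun hyx => hy (by rw [hyx]; exact hx))]
    exact h4 y hy
  | allStep x ψ e s b a =>
    refine ⟨Subf.trans (Subf.allS (Subf.refl _)) h1, h2, h3, ?_⟩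
    intro y hy
    have hx : x ∈ φ.vars := mem_vars_all h1
    show Function.update s x a y = b₀
    rw [Function.update_of_ne (fun hyx => hy (by rw [hyx]; exact hx))]
    exact h4 y hy
  | labStep L ψ e s b =>
    refine ⟨Subf.trans (Subf.labS (Subf.refl _)) h1, ?_, ?_, h4⟩
    · intro L' χ hL'
      rcases update_eq_some_cases e L L' _ χ hL' with ⟨heq, rfl⟩ | ⟨hne, hold⟩
      · exact h1
      · exact h2 L' χ hold
    · intro L' hne
      by_cases hL : L' = L
      · subst hL; exact mem_labels_lab h1
      · refine h3 L' ?_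
        intro h0
        apply hne
        show Function.update e L (some (SCLFormula.lab L ψ)) L' = none
        rw [Function.update_of_ne hL]
        exact h0
  | claimStep L e s b χ hχ =>
    exact ⟨h2 L χ hχ, h2, h3, h4⟩

private lemma option_pmap_subtype_inj {α : Type*} {P : α → Prop} {o1 o2 : Option α}
    {H1 : ∀ a ∈ o1, P a} {H2 : ∀ a ∈ o2, P a}
    (h : o1.pmap (fun a h => (⟨a, h⟩ : Subtype P)) H1
       = o2.pmap (fun a h => (⟨a, h⟩ : Subtype P)) H2) : o1 = o2 := by
  cases o1 <;> cases o2 <;> simp [Option.pmap, Subtype.ext_iff] at h ⊢ <;> try exact h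

lemma countable_Qpos (C : Set M.Dom) (hC : C.Countable) :
    {p : SCLPos V M.Dom | Qpos M φ b₀ p ∧ p.asg '' ↑φ.vars ⊆ C}.Countable := by
  classical
  haveI hfin1 : Finite {ψ : SCLFormula V // Subf ψ φ} := (subf_finite φ).to_subtype
  haveI := hC.to_subtype
  rw [← Set.countable_coe_iff]
  apply Function.Injective.countable (β := {ψ : SCLFormula V // Subf ψ φ} ×
      ({L : ℕ // L ∈ φ.labels} → Option {ψ : SCLFormula V // Subf ψ φ}) ×
      ({x : ℕ // x ∈ φ.vars} → C) × Bool)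
    (f := fun (pp : {p : SCLPos V M.Dom | Qpos M φ b₀ p ∧ p.asg '' ↑φ.vars ⊆ C}) =>
      (⟨pp.1.form, pp.2.1.1⟩,
      fun L => (pp.1.env L.1).pmap (fun χ hχ => ⟨χ, hχ⟩)
        (fun χ hχ => pp.2.1.2.1 L.1 χ hχ),
      fun x => ⟨pp.1.asg x.1, pp.2.2 (Set.mem_image_of_mem _ (Finset.mem_coe.mpr x.2))⟩,
      pp.1.pol))
  rintro ⟨⟨f1, e1, s1, b1⟩, hp1, hs1⟩ ⟨⟨f2, e2, s2, b2⟩, hp2, hs2⟩ heq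
  simp only [Prod.mk.injEq, Subtype.mk.injEq] at heq
  obtain ⟨hf, henv, hasg, hpol⟩ := heq
  apply Subtype.ext
  simp only [SCLPos.mk.injEq]
  refine ⟨hf, ?_, ?_, hpol⟩
  · funext L
    by_cases hL : L ∈ φ.labels
    · exact option_pmap_subtype_inj (congrFun henv ⟨L, hL⟩)
    · have hn1 : e1 L = none := by
        by_contra hne
        exact hL (hp1.2.2.1 L hne)
      have hn2 : e2 L = none := by
        by_contra hne
        exact hL (hp2.2.2.1 L hne)
      rw [hn1, hn2]
  · funext x
    by_cases hx : x ∈ φ.vars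
    · simpa [Subtype.ext_iff] using congrFun hasg ⟨x, hx⟩
    · exact (hp1.2.2.2 x hx).trans (hp2.2.2.2 x hx).symm

end Positions


/-! ### The bisimulation between the game on `M` and the game on a substructure -/

section Bridge

open SCLFormula

variable {V : Vocab} (M : Struct.{u} V) (φ : SCLFormula V) (B : Set M.Dom) (hB : B.Nonempty)

/-- The transfer relation between positions of the evaluation game on the
substructure induced by `B` and positions of the evaluation game on `M`. -/
def RelP (p' : SCLPos V ↥B) (q : SCLPos V M.Dom) : Prop :=
  p'.form = q.form ∧ p'.env = q.env ∧ p'.pol = q.pol ∧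
  Subf q.form φ ∧ (∀ L χ, q.env L = some χ → Subf χ φ) ∧
  (∀ x ∈ q.form.freeVars, (p'.asg x : M.Dom) = q.asg x) ∧
  (∀ L χ, q.env L = some χ → ∀ x ∈ χ.freeVars, (p'.asg x : M.Dom) = q.asg x) ∧
  (∀ x ∈ φ.vars, q.asg x ∈ B)

/-- The invariant cutting the big game down to `B`-valued positions. -/
def InvP (q : SCLPos V M.Dom) : Prop := ∀ x ∈ φ.vars, q.asg x ∈ B

lemma posTurn_congr {D₁ : Type u} {D₂ : Type u} {p : SCLPos V D₁} {q : SCLPos V D₂}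
    (h1 : p.form = q.form) (h2 : p.pol = q.pol) : posTurn p = posTurn q := by
  obtain ⟨f1, e1, s1, b1⟩ := p
  obtain ⟨f2, e2, s2, b2⟩ := q
  have hf : f1 = f2 := h1
  have hb : b1 = b2 := h2
  subst hf
  subst hb
  cases f1 <;> cases b1 <;> rfl

lemma atomSat_congr {α : SCLFormula V} (hα : α.IsFOAtom) {t : ℕ → ↥B} {qs : ℕ → M.Dom}
    (hag : ∀ x ∈ α.freeVars, (t x : M.Dom) = qs x) :
    atomSat (substruct M B hB) t α ↔ atomSat M qs α := by
  cases α with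
  | bot => exact Iff.rfl
  | eq x y =>
    have hx := hag x (by simp [SCLFormula.freeVars])
    have hy := hag y (by simp [SCLFormula.freeVars])
    show t x = t y ↔ qs x = qs y
    rw [← hx, ← hy]
    exact ⟨fun h => congrArg _ h, fun h => Subtype.ext h⟩
  | rel R a =>
    show M.interp R (fun i => ((t (a i) : M.Dom))) ↔ M.interp R (fun i => qs (a i))
    have : (fun i => ((t (a i)) : M.Dom)) = fun i => qs (a i) := by
      funext i
      refine hag (a i) ?_
      simp only [SCLFormula.freeVars, Finset.mem_image]
      exact ⟨i, Finset.mem_univ i, rfl⟩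
    rw [this]
  | claim L => exact hα.elim
  | not ψ => exact hα.elim
  | and ψ χ => exact hα.elim
  | or ψ χ => exact hα.elim
  | ex x ψ => exact hα.elim
  | all x ψ => exact hα.elim
  | lab L ψ => exact hα.elim

lemma posWin_congr {p' : SCLPos V ↥B} {q : SCLPos V M.Dom}
    (h1 : p'.form = q.form) (h3 : p'.pol = q.pol)
    (hag : ∀ x ∈ q.form.freeVars, (p'.asg x : M.Dom) = q.asg x) (pl : Player) :
    posWin (substruct M B hB) p' pl ↔ posWin M q pl := by
  obtain ⟨f1, e1, s1, b1⟩ := p'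
  obtain ⟨f2, e2, s2, b2⟩ := q
  have hf : f1 = f2 := h1
  have hb : b1 = b2 := h3
  subst hf
  subst hb
  have hag' : ∀ x ∈ f1.freeVars, (s1 x : M.Dom) = s2 x := hag
  cases pl with
  | eloise =>
    show f1.IsFOAtom ∧ (atomSat (substruct M B hB) s1 f1 ↔ b1 = true)
      ↔ f1.IsFOAtom ∧ (atomSat M s2 f1 ↔ b1 = true)
    constructor
    · rintro ⟨ha, hiff⟩
      exact ⟨ha, (atomSat_congr M B hB ha hag').symm.trans hiff⟩
    · rintro ⟨ha, hiff⟩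
      exact ⟨ha, (atomSat_congr M B hB ha hag').trans hiff⟩
  | abelard =>
    show f1.IsFOAtom ∧ ¬ (atomSat (substruct M B hB) s1 f1 ↔ b1 = true)
      ↔ f1.IsFOAtom ∧ ¬ (atomSat M s2 f1 ↔ b1 = true)
    constructor
    · rintro ⟨ha, hiff⟩
      exact ⟨ha, fun hc => hiff ((atomSat_congr M B hB ha hag').trans hc)⟩
    · rintro ⟨ha, hiff⟩
      exact ⟨ha, fun hc => hiff ((atomSat_congr M B hB ha hag').symm.trans hc)⟩

/-- Forth: a move of the substructure game is matched by a move of the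
`M`-game, preserving the transfer relation and `B`-goodness. -/
lemma forth_b {p' r' : SCLPos V ↥B} {q : SCLPos V M.Dom} {m k : ℕ}
    (hR : RelP M φ B p' q) (hstep : BStep (substruct M B hB) (p', m) (r', k)) :
    ∃ r : SCLPos V M.Dom, BStep M (q, m) (r, k) ∧ InvP M φ B r ∧ RelP M φ B r' r := by
  obtain ⟨qf, qe, qs, qb⟩ := q
  obtain ⟨h1, h2, h3, h4, h5, h6, h7, h8⟩ := hR
  cases hstep with
  | neg ψ e t b n =>
    have hf : SCLFormula.not ψ = qf := h1
    have he : e = qe := h2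
    have hb : b = qb := h3
    subst hf; subst he; subst hb
    exact ⟨⟨ψ, e, qs, !b⟩, BStep.neg ψ e qs b m, h8,
      rfl, rfl, rfl, Subf.trans (Subf.notS (Subf.refl _)) h4, h5, h6, h7, h8⟩
  | andLeft φ₁ φ₂ e t b n =>
    have hf : SCLFormula.and φ₁ φ₂ = qf := h1
    have he : e = qe := h2
    have hb : b = qb := h3
    subst hf; subst he; subst hb
    exact ⟨⟨φ₁, e, qs, b⟩, BStep.andLeft φ₁ φ₂ e qs b m, h8,
      rfl, rfl, rfl, Subf.trans (Subf.andL (Subf.refl _)) h4, h5,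
      fun x hx => h6 x (Finset.mem_union_left _ hx), h7, h8⟩
  | andRight φ₁ φ₂ e t b n =>
    have hf : SCLFormula.and φ₁ φ₂ = qf := h1
    have he : e = qe := h2
    have hb : b = qb := h3
    subst hf; subst he; subst hb
    exact ⟨⟨φ₂, e, qs, b⟩, BStep.andRight φ₁ φ₂ e qs b m, h8,
      rfl, rfl, rfl, Subf.trans (Subf.andR (Subf.refl _)) h4, h5,
      fun x hx => h6 x (Finset.mem_union_right _ hx), h7, h8⟩
  | orLeft φ₁ φ₂ e t b n =>
    have hf : SCLFormula.or φ₁ φ₂ = qf := h1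
    have he : e = qe := h2
    have hb : b = qb := h3
    subst hf; subst he; subst hb
    exact ⟨⟨φ₁, e, qs, b⟩, BStep.orLeft φ₁ φ₂ e qs b m, h8,
      rfl, rfl, rfl, Subf.trans (Subf.orL (Subf.refl _)) h4, h5,
      fun x hx => h6 x (Finset.mem_union_left _ hx), h7, h8⟩
  | orRight φ₁ φ₂ e t b n =>
    have hf : SCLFormula.or φ₁ φ₂ = qf := h1
    have he : e = qe := h2
    have hb : b = qb := h3
    subst hf; subst he; subst hb
    exact ⟨⟨φ₂, e, qs, b⟩, BStep.orRight φ₁ φ₂ e qs b m, h8,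
      rfl, rfl, rfl, Subf.trans (Subf.orR (Subf.refl _)) h4, h5,
      fun x hx => h6 x (Finset.mem_union_right _ hx), h7, h8⟩
  | exStep x ψ e t b n a =>
    have hf : SCLFormula.ex x ψ = qf := h1
    have he : e = qe := h2
    have hb : b = qb := h3
    subst hf; subst he; subst hb
    obtain ⟨av, hav⟩ := (a : ↥B)
    refine ⟨⟨ψ, e, Function.update qs x av, b⟩,
      BStep.exStep x ψ e qs b m av, ?_, rfl, rfl, rfl,
      Subf.trans (Subf.exS (Subf.refl _)) h4, h5, ?_, ?_, ?_⟩
    · intro y hy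
      dsimp only
      by_cases hxy : y = x
      · subst hxy; simpa using hav
      · rw [Function.update_of_ne hxy]; exact h8 y hy
    · intro y hy
      dsimp only
      by_cases hxy : y = x
      · subst hxy; rw [Function.update_self]; exact congrArg Subtype.val (Function.update_self (f := t) (a := y) (v := (⟨av, hav⟩ : (substruct M B hB).Dom)))
      · rw [Function.update_of_ne hxy]
        exact (congrArg Subtype.val (Function.update_of_ne (f := t) (v := (⟨av, hav⟩ : (substruct M B hB).Dom)) hxy)).trans (h6 y (Finset.mem_sdiff.mpr ⟨hy, by simp [hxy]⟩))
    · intro L χ hχ y hyχ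
      dsimp only
      by_cases hxy : y = x
      · subst hxy; rw [Function.update_self]; exact congrArg Subtype.val (Function.update_self (f := t) (a := y) (v := (⟨av, hav⟩ : (substruct M B hB).Dom)))
      · rw [Function.update_of_ne hxy]
        exact (congrArg Subtype.val (Function.update_of_ne (f := t) (v := (⟨av, hav⟩ : (substruct M B hB).Dom)) hxy)).trans (h7 L χ hχ y hyχ)
    · intro y hy
      dsimp only
      by_cases hxy : y = x
      · subst hxy; simpa using hav
      · rw [Function.update_of_ne hxy]; exact h8 y hy
  | allStep x ψ e t b n a =>
    have hf : SCLFormula.all x ψ = qf := h1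
    have he : e = qe := h2
    have hb : b = qb := h3
    subst hf; subst he; subst hb
    obtain ⟨av, hav⟩ := (a : ↥B)
    refine ⟨⟨ψ, e, Function.update qs x av, b⟩,
      BStep.allStep x ψ e qs b m av, ?_, rfl, rfl, rfl,
      Subf.trans (Subf.allS (Subf.refl _)) h4, h5, ?_, ?_, ?_⟩
    · intro y hy
      dsimp only
      by_cases hxy : y = x
      · subst hxy; simpa using hav
      · rw [Function.update_of_ne hxy]; exact h8 y hy
    · intro y hy
      dsimp only
      by_cases hxy : y = x
      · subst hxy; rw [Function.update_self]; exact congrArg Subtype.val (Function.update_self (f := t) (a := y) (v := (⟨av, hav⟩ : (substruct M B hB).Dom)))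
      · rw [Function.update_of_ne hxy]
        exact (congrArg Subtype.val (Function.update_of_ne (f := t) (v := (⟨av, hav⟩ : (substruct M B hB).Dom)) hxy)).trans (h6 y (Finset.mem_sdiff.mpr ⟨hy, by simp [hxy]⟩))
    · intro L χ hχ y hyχ
      dsimp only
      by_cases hxy : y = x
      · subst hxy; rw [Function.update_self]; exact congrArg Subtype.val (Function.update_self (f := t) (a := y) (v := (⟨av, hav⟩ : (substruct M B hB).Dom)))
      · rw [Function.update_of_ne hxy]
        exact (congrArg Subtype.val (Function.update_of_ne (f := t) (v := (⟨av, hav⟩ : (substruct M B hB).Dom)) hxy)).trans (h7 L χ hχ y hyχ)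
    · intro y hy
      dsimp only
      by_cases hxy : y = x
      · subst hxy; simpa using hav
      · rw [Function.update_of_ne hxy]; exact h8 y hy
  | labStep L ψ e t b n =>
    have hf : SCLFormula.lab L ψ = qf := h1
    have he : e = qe := h2
    have hb : b = qb := h3
    subst hf; subst he; subst hb
    refine ⟨⟨ψ, Function.update e L (some (SCLFormula.lab L ψ)), qs, b⟩,
      BStep.labStep L ψ e qs b m, h8, rfl, rfl, rfl,
      Subf.trans (Subf.labS (Subf.refl _)) h4, ?_, h6, ?_, h8⟩
    · intro L' χ hχ
      rcases update_eq_some_cases e L L' _ χ hχ with ⟨heq, rfl⟩ | ⟨hne, hold⟩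
      · exact h4
      · exact h5 L' χ hold
    · intro L' χ hχ
      rcases update_eq_some_cases e L L' _ χ hχ with ⟨heq, rfl⟩ | ⟨hne, hold⟩
      · exact h6
      · exact h7 L' χ hold
  | claimStep L e t b χ n hχe =>
    have hf : SCLFormula.claim L = qf := h1
    have he : e = qe := h2
    have hb : b = qb := h3
    subst hf; subst he; subst hb
    have hχe' : e L = some χ := hχe
    exact ⟨⟨χ, e, qs, b⟩, BStep.claimStep L e qs b χ k hχe', h8,
      rfl, rfl, rfl, h5 L χ hχe', h5, h7 L χ hχe', h7, h8⟩

/-- Back: a `B`-good move of the `M`-game is matched by a move of the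
substructure game. -/
lemma back_b {p' : SCLPos V ↥B} {q r : SCLPos V M.Dom} {m k : ℕ}
    (hR : RelP M φ B p' q) (hstep : BStep M (q, m) (r, k)) (hInv : InvP M φ B r) :
    ∃ r' : SCLPos V ↥B, BStep (substruct M B hB) (p', m) (r', k) ∧ RelP M φ B r' r := by
  obtain ⟨pf, pe, pt, pb⟩ := p'
  obtain ⟨h1, h2, h3, h4, h5, h6, h7, h8⟩ := hR
  cases hstep with
  | neg ψ e s b n =>
    have hf : pf = SCLFormula.not ψ := h1
    have he : e = pe := h2.symm
    have hb : b = pb := h3.symm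
    subst hf; subst he; subst hb
    exact ⟨⟨ψ, e, pt, !b⟩, BStep.neg (M := substruct M B hB) ψ e pt b m,
      rfl, rfl, rfl, Subf.trans (Subf.notS (Subf.refl _)) h4, h5, h6, h7, h8⟩
  | andLeft φ₁ φ₂ e s b n =>
    have hf : pf = SCLFormula.and φ₁ φ₂ := h1
    have he : e = pe := h2.symm
    have hb : b = pb := h3.symm
    subst hf; subst he; subst hb
    exact ⟨⟨φ₁, e, pt, b⟩, BStep.andLeft (M := substruct M B hB) φ₁ φ₂ e pt b m,
      rfl, rfl, rfl, Subf.trans (Subf.andL (Subf.refl _)) h4, h5,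
      fun x hx => h6 x (Finset.mem_union_left _ hx), h7, h8⟩
  | andRight φ₁ φ₂ e s b n =>
    have hf : pf = SCLFormula.and φ₁ φ₂ := h1
    have he : e = pe := h2.symm
    have hb : b = pb := h3.symm
    subst hf; subst he; subst hb
    exact ⟨⟨φ₂, e, pt, b⟩, BStep.andRight (M := substruct M B hB) φ₁ φ₂ e pt b m,
      rfl, rfl, rfl, Subf.trans (Subf.andR (Subf.refl _)) h4, h5,
      fun x hx => h6 x (Finset.mem_union_right _ hx), h7, h8⟩
  | orLeft φ₁ φ₂ e s b n =>
    have hf : pf = SCLFormula.or φ₁ φ₂ := h1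
    have he : e = pe := h2.symm
    have hb : b = pb := h3.symm
    subst hf; subst he; subst hb
    exact ⟨⟨φ₁, e, pt, b⟩, BStep.orLeft (M := substruct M B hB) φ₁ φ₂ e pt b m,
      rfl, rfl, rfl, Subf.trans (Subf.orL (Subf.refl _)) h4, h5,
      fun x hx => h6 x (Finset.mem_union_left _ hx), h7, h8⟩
  | orRight φ₁ φ₂ e s b n =>
    have hf : pf = SCLFormula.or φ₁ φ₂ := h1
    have he : e = pe := h2.symm
    have hb : b = pb := h3.symm
    subst hf; subst he; subst hb
    exact ⟨⟨φ₂, e, pt, b⟩, BStep.orRight (M := substruct M B hB) φ₁ φ₂ e pt b m,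
      rfl, rfl, rfl, Subf.trans (Subf.orR (Subf.refl _)) h4, h5,
      fun x hx => h6 x (Finset.mem_union_right _ hx), h7, h8⟩
  | exStep x ψ e s b n a =>
    have hf : pf = SCLFormula.ex x ψ := h1
    have he : e = pe := h2.symm
    have hb : b = pb := h3.symm
    subst hf; subst he; subst hb
    have hx : x ∈ φ.vars := mem_vars_ex h4
    have ha : a ∈ B := by
      have := hInv x hx
      simpa using this
    refine ⟨⟨ψ, e, Function.update pt x (⟨a, ha⟩ : ↥B), b⟩,
      BStep.exStep (M := substruct M B hB) x ψ e pt b m (⟨a, ha⟩ : ↥B), rfl, rfl, rfl,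
      Subf.trans (Subf.exS (Subf.refl _)) h4, h5, ?_, ?_, hInv⟩
    · intro y hy
      dsimp only
      by_cases hxy : y = x
      · subst hxy; simp
      · simp only [Function.update_of_ne hxy]
        exact h6 y (Finset.mem_sdiff.mpr ⟨hy, by simp [hxy]⟩)
    · intro L χ hχ y hyχ
      dsimp only
      by_cases hxy : y = x
      · subst hxy; simp
      · simp only [Function.update_of_ne hxy]
        exact h7 L χ hχ y hyχ
  | allStep x ψ e s b n a =>
    have hf : pf = SCLFormula.all x ψ := h1
    have he : e = pe := h2.symm
    have hb : b = pb := h3.symm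
    subst hf; subst he; subst hb
    have hx : x ∈ φ.vars := mem_vars_all h4
    have ha : a ∈ B := by
      have := hInv x hx
      simpa using this
    refine ⟨⟨ψ, e, Function.update pt x (⟨a, ha⟩ : ↥B), b⟩,
      BStep.allStep (M := substruct M B hB) x ψ e pt b m (⟨a, ha⟩ : ↥B), rfl, rfl, rfl,
      Subf.trans (Subf.allS (Subf.refl _)) h4, h5, ?_, ?_, hInv⟩
    · intro y hy
      dsimp only
      by_cases hxy : y = x
      · subst hxy; simp
      · simp only [Function.update_of_ne hxy]
        exact h6 y (Finset.mem_sdiff.mpr ⟨hy, by simp [hxy]⟩)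
    · intro L χ hχ y hyχ
      dsimp only
      by_cases hxy : y = x
      · subst hxy; simp
      · simp only [Function.update_of_ne hxy]
        exact h7 L χ hχ y hyχ
  | labStep L ψ e s b n =>
    have hf : pf = SCLFormula.lab L ψ := h1
    have he : e = pe := h2.symm
    have hb : b = pb := h3.symm
    subst hf; subst he; subst hb
    refine ⟨⟨ψ, Function.update e L (some (SCLFormula.lab L ψ)), pt, b⟩,
      BStep.labStep (M := substruct M B hB) L ψ e pt b m, rfl, rfl, rfl,
      Subf.trans (Subf.labS (Subf.refl _)) h4, ?_, h6, ?_, h8⟩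
    · intro L' χ hχ
      rcases update_eq_some_cases e L L' _ χ hχ with ⟨heq, rfl⟩ | ⟨hne, hold⟩
      · exact h4
      · exact h5 L' χ hold
    · intro L' χ hχ
      rcases update_eq_some_cases e L L' _ χ hχ with ⟨heq, rfl⟩ | ⟨hne, hold⟩
      · exact h6
      · exact h7 L' χ hold
  | claimStep L e s b χ n hχe =>
    have hf : pf = SCLFormula.claim L := h1
    have he : e = pe := h2.symm
    have hb : b = pb := h3.symm
    subst hf; subst he; subst hb
    exact ⟨⟨χ, e, pt, b⟩, BStep.claimStep (M := substruct M B hB) L e pt b χ k hχe,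
      rfl, rfl, rfl, h5 L χ hχe, h5, h7 L χ hχe, h7, h8⟩

end Bridge


/-! ### Step conversions and successor lemmas -/

section Conversions

open SCLFormula

variable {V : Vocab} (M : Struct.{u} V) (φ : SCLFormula V) (B : Set M.Dom) (hB : B.Nonempty)

lemma bstep_ustep {p q : SCLPos V M.Dom} {m k : ℕ} (h : BStep M (p, m) (q, k)) :
    UStep M p q := by
  cases h with
  | neg ψ e s b n => exact UStep.neg ψ e s b
  | andLeft φ₁ φ₂ e s b n => exact UStep.andLeft φ₁ φ₂ e s b
  | andRight φ₁ φ₂ e s b n => exact UStep.andRight φ₁ φ₂ e s b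
  | orLeft φ₁ φ₂ e s b n => exact UStep.orLeft φ₁ φ₂ e s b
  | orRight φ₁ φ₂ e s b n => exact UStep.orRight φ₁ φ₂ e s b
  | exStep x ψ e s b n a => exact UStep.exStep x ψ e s b a
  | allStep x ψ e s b n a => exact UStep.allStep x ψ e s b a
  | labStep L ψ e s b n => exact UStep.labStep L ψ e s b
  | claimStep L e s b χ n hχ => exact UStep.claimStep L e s b χ hχ

lemma ustep_bstep {p q : SCLPos V M.Dom} (h : UStep M p q) :
    ∃ m k, BStep M (p, m) (q, k) := by
  cases h with
  | neg ψ e s b => exact ⟨0, 0, BStep.neg ψ e s b 0⟩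
  | andLeft φ₁ φ₂ e s b => exact ⟨0, 0, BStep.andLeft φ₁ φ₂ e s b 0⟩
  | andRight φ₁ φ₂ e s b => exact ⟨0, 0, BStep.andRight φ₁ φ₂ e s b 0⟩
  | orLeft φ₁ φ₂ e s b => exact ⟨0, 0, BStep.orLeft φ₁ φ₂ e s b 0⟩
  | orRight φ₁ φ₂ e s b => exact ⟨0, 0, BStep.orRight φ₁ φ₂ e s b 0⟩
  | exStep x ψ e s b a => exact ⟨0, 0, BStep.exStep x ψ e s b 0 a⟩
  | allStep x ψ e s b a => exact ⟨0, 0, BStep.allStep x ψ e s b 0 a⟩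
  | labStep L ψ e s b => exact ⟨0, 0, BStep.labStep L ψ e s b 0⟩
  | claimStep L e s b χ hχ => exact ⟨1, 0, BStep.claimStep L e s b χ 0 hχ⟩

lemma forth_u {p' r' : SCLPos V ↥B} {q : SCLPos V M.Dom}
    (hR : RelP M φ B p' q) (hstep : UStep (substruct M B hB) p' r') :
    ∃ r : SCLPos V M.Dom, UStep M q r ∧ InvP M φ B r ∧ RelP M φ B r' r := by
  obtain ⟨m, k, hb⟩ := ustep_bstep (substruct M B hB) hstep
  obtain ⟨r, hbr, hi, hrel⟩ := forth_b M φ B hB hR hb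
  exact ⟨r, bstep_ustep M hbr, hi, hrel⟩

lemma back_u {p' : SCLPos V ↥B} {q r : SCLPos V M.Dom}
    (hR : RelP M φ B p' q) (hstep : UStep M q r) (hInv : InvP M φ B r) :
    ∃ r' : SCLPos V ↥B, UStep (substruct M B hB) p' r' ∧ RelP M φ B r' r := by
  obtain ⟨m, k, hb⟩ := ustep_bstep M hstep
  obtain ⟨r', hbr, hrel⟩ := back_b M φ B hB hR hb hInv
  exact ⟨r', bstep_ustep (substruct M B hB) hbr, hrel⟩

lemma bstep_inv_succ {b₀ : M.Dom} (hb₀ : b₀ ∈ B) {q r : SCLPos V M.Dom} {m k : ℕ}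
    (hq : InvP M φ B q) (h : BStep M (q, m) (r, k)) :
    ∃ r₂, BStep M (q, m) (r₂, k) ∧ InvP M φ B r₂ := by
  cases h with
  | neg ψ e s b n => exact ⟨_, BStep.neg ψ e s b m, fun x hx => hq x hx⟩
  | andLeft φ₁ φ₂ e s b n => exact ⟨_, BStep.andLeft φ₁ φ₂ e s b m, fun x hx => hq x hx⟩
  | andRight φ₁ φ₂ e s b n => exact ⟨_, BStep.andRight φ₁ φ₂ e s b m, fun x hx => hq x hx⟩
  | orLeft φ₁ φ₂ e s b n => exact ⟨_, BStep.orLeft φ₁ φ₂ e s b m, fun x hx => hq x hx⟩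
  | orRight φ₁ φ₂ e s b n => exact ⟨_, BStep.orRight φ₁ φ₂ e s b m, fun x hx => hq x hx⟩
  | exStep x ψ e s b n a =>
    refine ⟨⟨ψ, e, Function.update s x b₀, b⟩, BStep.exStep x ψ e s b m b₀, ?_⟩
    intro y hy
    dsimp only
    by_cases hxy : y = x
    · subst hxy; simp [hb₀]
    · rw [Function.update_of_ne hxy]; exact hq y hy
  | allStep x ψ e s b n a =>
    refine ⟨⟨ψ, e, Function.update s x b₀, b⟩, BStep.allStep x ψ e s b m b₀, ?_⟩
    intro y hy
    dsimp only
    by_cases hxy : y = x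
    · subst hxy; simp [hb₀]
    · rw [Function.update_of_ne hxy]; exact hq y hy
  | labStep L ψ e s b n => exact ⟨_, BStep.labStep L ψ e s b m, fun x hx => hq x hx⟩
  | claimStep L e s b χ n hχ => exact ⟨_, BStep.claimStep L e s b χ k hχ, fun x hx => hq x hx⟩

lemma ustep_inv_succ {b₀ : M.Dom} (hb₀ : b₀ ∈ B) {q r : SCLPos V M.Dom}
    (hq : InvP M φ B q) (h : UStep M q r) :
    ∃ r₂, UStep M q r₂ ∧ InvP M φ B r₂ := by
  obtain ⟨m, k, hb⟩ := ustep_bstep M h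
  obtain ⟨r₂, hbr, hi⟩ := bstep_inv_succ M φ B hb₀ hq hb
  exact ⟨r₂, bstep_ustep M hbr, hi⟩

lemma relP_init {b₀ : M.Dom} (hφ : φ.freeVars = ∅) (hb₀ : b₀ ∈ B) (s : ℕ → ↥B) :
    RelP M φ B (initPos φ s) (initPos φ (fun _ => b₀)) := by
  refine ⟨rfl, rfl, rfl, Subf.refl φ, ?_, ?_, ?_, fun x _ => hb₀⟩
  · intro L χ h
    exact absurd h (by simp [initPos])
  · intro x hx
    have hx' : x ∈ φ.freeVars := hx
    rw [hφ] at hx'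
    simp at hx'
  · intro L χ h
    exact absurd h (by simp [initPos])

end Conversions

/-! ### The `G_ω` layer -/

section OmegaLayer

open SCLFormula

variable {V : Vocab} (M : Struct.{u} V) (φ : SCLFormula V) (B : Set M.Dom) (hB : B.Nonempty)
variable (b₀ : M.Dom)

def RelOmega : GOPos V ↥B → GOPos V M.Dom → Prop
  | .start, .start => True
  | .mid n, .mid n' => n = n'
  | .inner p' k, .inner q l => RelP M φ B p' q ∧ k = l
  | _, _ => False

def InvOmega : GOPos V M.Dom → Prop
  | .inner q _ => InvP M φ B q
  | _ => True

def QposOmega : GOPos V M.Dom → Prop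
  | .inner q _ => Qpos M φ b₀ q
  | _ => True

def valOmega : GOPos V M.Dom → Set M.Dom
  | .inner q _ => q.asg '' ↑φ.vars
  | _ => ∅

lemma valOmega_fin : ∀ g, (valOmega M φ g).Finite := by
  intro g
  cases g with
  | start => exact Set.finite_empty
  | mid n => exact Set.finite_empty
  | inner q c => exact φ.vars.finite_toSet.image _

lemma countable_QposOmega (C : Set M.Dom) (hC : C.Countable) :
    {g : GOPos V M.Dom | QposOmega M φ b₀ g ∧ valOmega M φ g ⊆ C}.Countable := by
  have h1 : ({GOPos.start} : Set (GOPos V M.Dom)).Countable := Set.countable_singleton _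
  have h2 : (Set.range (GOPos.mid (V := V) (D := M.Dom))).Countable := Set.countable_range _
  have h3 : (((fun pc : SCLPos V M.Dom × ℕ => GOPos.inner pc.1 pc.2) ''
      ({p : SCLPos V M.Dom | Qpos M φ b₀ p ∧ p.asg '' ↑φ.vars ⊆ C} ×ˢ
        (Set.univ : Set ℕ)))).Countable :=
    (((countable_Qpos M φ b₀ C hC).prod (Set.countable_univ))).image _
  refine ((h1.union h2).union h3).mono ?_
  rintro g ⟨hq, hval⟩
  cases g with
  | start => exact Or.inl (Or.inl rfl)
  | mid n => exact Or.inl (Or.inr ⟨n, rfl⟩)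
  | inner q c => exact Or.inr ⟨(q, c), ⟨⟨hq, hval⟩, Set.mem_univ _⟩, rfl⟩

lemma QposOmega_step {g g₂ : GOPos V M.Dom}
    (hg : QposOmega M φ b₀ g) (h : GOStep M φ (fun _ => b₀) g g₂) :
    QposOmega M φ b₀ g₂ := by
  cases h with
  | abelardPick n => trivial
  | eloisePick n' n hn => exact Qpos_init M φ b₀
  | play p q mm kk hb => exact Qpos_step M φ b₀ hg (bstep_ustep M hb)

end OmegaLayer

/-- (Countable downward Löwenheim–Skolem for SCL and
BndSCL.)  If a sentence `φ` is true in `𝔄` under unbounded (resp. bounded)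
semantics, then `𝔄` has a countable substructure in which `φ` is true under
unbounded (resp. bounded) semantics. -/
theorem countable_downward_lowenheim_skolem {V : Vocab} (φ : SCLFormula V)
    (hφ : φ.freeVars = ∅) (M : Struct.{u} V) :
    ((∀ s : ℕ → M.Dom, SCLTrue M s φ) →
      ∃ (B : Set M.Dom) (hB : B.Nonempty), B.Countable ∧
        ∀ s : ℕ → ↥B, SCLTrue (substruct M B hB) s φ) ∧
    ((∀ s : ℕ → M.Dom, BndTrue M s φ) →
      ∃ (B : Set M.Dom) (hB : B.Nonempty), B.Countable ∧
        ∀ s : ℕ → ↥B, BndTrue (substruct M B hB) s φ) := by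
  classical
  obtain ⟨b₀⟩ := M.dom_nonempty
  constructor
  · -- unbounded semantics
    intro h
    obtain ⟨σ, hσ⟩ := h (fun _ => b₀)
    obtain ⟨B, hBc, hb₀, hvalv, hclose⟩ := hull_exists (gameU M)
      (initPos φ (fun _ => b₀)) σ (fun p => p.asg '' ↑φ.vars) b₀ (Qpos M φ b₀)
      (Qpos_init M φ b₀)
      (fun p q hp e => Qpos_step M φ b₀ hp e)
      (fun p => φ.vars.finite_toSet.image _)
      (fun C hC => countable_Qpos M φ b₀ C hC)
    have hBne : B.Nonempty := ⟨b₀, hb₀⟩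
    refine ⟨B, hBne, hBc, ?_⟩
    intro s
    have hInit : InvP M φ B (initPos φ (fun _ => b₀)) := fun x _ => hb₀
    have hres : ((gameU M).restrict (InvP M φ B)).WinningStrategy .eloise
        (initPos φ (fun _ => b₀)) σ := by
      refine GameArena.WinningStrategy.restrict hInit ?_ ?_ hσ
      · intro p hp hex
        obtain ⟨q, hq⟩ := hex
        obtain ⟨r₂, hstep, hi⟩ := ustep_inv_succ M φ B hb₀ hp hq
        exact ⟨r₂, hstep, hi⟩
      · intro w hw hall
        intro x hx
        refine hclose w hw ?_ (Set.mem_image_of_mem _ (Finset.mem_coe.mpr hx))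
        intro p hp d hd
        obtain ⟨y, hy, rfl⟩ := hd
        exact hall p hp y (Finset.mem_coe.mp hy)
    refine Bisim.transfer (A := (gameU M).restrict (InvP M φ B))
      (A' := gameU (substruct M B hBne)) (pl := .eloise)
      (R := RelP M φ B) (v := initPos φ (fun _ => b₀)) (v' := initPos φ s)
      (relP_init M φ B hφ hb₀ s) ?_ ?_ ?_ ?_ ⟨σ, hres⟩
    · intro p' p hR
      exact posTurn_congr hR.1 hR.2.2.1
    · intro p' p hR pl
      exact posWin_congr M B hBne hR.1 hR.2.2.1 hR.2.2.2.2.2.1 pl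
    · intro p' p q' hR he
      obtain ⟨r, hu, hi, hrel⟩ := forth_u M φ B hBne hR he
      exact ⟨r, ⟨hu, hi⟩, hrel⟩
    · intro p' p q hR he
      obtain ⟨q', hstep, hrel⟩ := back_u M φ B hBne hR he.1 he.2
      exact ⟨q', hstep, hrel⟩
  · -- bounded semantics
    intro h
    obtain ⟨σ, hσ⟩ := h (fun _ => b₀)
    obtain ⟨B, hBc, hb₀, hvalv, hclose⟩ := hull_exists (gameOmega M φ (fun _ => b₀))
      GOPos.start σ (valOmega M φ) b₀ (QposOmega M φ b₀)
      trivial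
      (fun g g₂ hg e => QposOmega_step M φ b₀ hg e)
      (valOmega_fin M φ)
      (fun C hC => countable_QposOmega M φ b₀ C hC)
    have hBne : B.Nonempty := ⟨b₀, hb₀⟩
    refine ⟨B, hBne, hBc, ?_⟩
    intro s
    have hInit : InvP M φ B (initPos φ (fun _ => b₀)) := fun x _ => hb₀
    have hres : ((gameOmega M φ (fun _ => b₀)).restrict (InvOmega M φ B)).WinningStrategy
        .eloise GOPos.start σ := by
      refine GameArena.WinningStrategy.restrict trivial ?_ ?_ hσ
      · intro g hg hex
        cases g with
        | start => exact ⟨GOPos.mid 0, GOStep.abelardPick 0, trivial⟩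
        | mid n => exact ⟨GOPos.inner (initPos φ (fun _ => b₀)) n,
            GOStep.eloisePick n n le_rfl, hInit⟩
        | inner q c =>
          obtain ⟨g₂, hg₂⟩ := hex
          cases hg₂ with
          | play p q2 mm kk hb =>
            obtain ⟨r₂, hstep, hi⟩ := bstep_inv_succ M φ B hb₀ hg hb
            exact ⟨GOPos.inner r₂ kk, GOStep.play _ _ _ _ hstep, hi⟩
      · intro w hw hall
        have hval : valOmega M φ (σ w) ⊆ B := by
          refine hclose w hw ?_
          intro g hgw
          cases g with
          | start => exact Set.empty_subset _
          | mid n => exact Set.empty_subset _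
          | inner q c =>
            intro d hd
            obtain ⟨y, hy, rfl⟩ := hd
            exact hall _ hgw y (Finset.mem_coe.mp hy)
        rcases hg : σ w with _ | n | ⟨q, c⟩
        · trivial
        · trivial
        · rw [hg] at hval
          intro x hx
          exact hval (Set.mem_image_of_mem _ (Finset.mem_coe.mpr hx))
    refine Bisim.transfer (A := (gameOmega M φ (fun _ => b₀)).restrict (InvOmega M φ B))
      (A' := gameOmega (substruct M B hBne) φ s) (pl := .eloise)
      (R := RelOmega M φ B) (v := GOPos.start) (v' := GOPos.start)
      trivial ?_ ?_ ?_ ?_ ⟨σ, hres⟩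
    · intro g' g hR
      cases g' with
      | start => cases g with
        | start => rfl
        | mid n => exact hR.elim
        | inner q c => exact hR.elim
      | mid n => cases g with
        | start => exact hR.elim
        | mid n' => rfl
        | inner q c => exact hR.elim
      | inner p' k => cases g with
        | start => exact hR.elim
        | mid n => exact hR.elim
        | inner q l => exact posTurn_congr hR.1.1 hR.1.2.2.1
    · intro g' g hR pl
      cases g' with
      | start => cases g with
        | start => exact Iff.rfl
        | mid n => exact hR.elim
        | inner q c => exact hR.elim
      | mid n => cases g with
        | start => exact hR.elim
        | mid n' => exact Iff.rfl
        | inner q c => exact hR.elim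
      | inner p' k => cases g with
        | start => exact hR.elim
        | mid n => exact hR.elim
        | inner q l => exact posWin_congr M B hBne hR.1.1 hR.1.2.2.1 hR.1.2.2.2.2.2.1 pl
    · -- forth
      intro g' g q' hR he
      cases he with
      | abelardPick n =>
        cases g with
        | start => exact ⟨GOPos.mid n, ⟨GOStep.abelardPick n, trivial⟩, rfl⟩
        | mid n' => exact hR.elim
        | inner q c => exact hR.elim
      | eloisePick n' n hn =>
        cases g with
        | start => exact hR.elim
        | mid n'' =>
          have : n' = n'' := hR
          subst this
          exact ⟨GOPos.inner (initPos φ (fun _ => b₀)) n,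
            ⟨GOStep.eloisePick n' n hn, hInit⟩,
            relP_init M φ B hφ hb₀ s, rfl⟩
        | inner q c => exact hR.elim
      | play p q2 mm kk hb =>
        cases g with
        | start => exact hR.elim
        | mid n => exact hR.elim
        | inner qq ll =>
          obtain ⟨hRp, hml⟩ := hR
          subst hml
          obtain ⟨r, hbr, hi, hrel⟩ := forth_b M φ B hBne hRp hb
          exact ⟨GOPos.inner r kk, ⟨GOStep.play _ _ _ _ hbr, hi⟩, hrel, rfl⟩
    · -- back
      intro g' g q hR he
      obtain ⟨he, hinv⟩ := he
      cases he with
      | abelardPick n =>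
        cases g' with
        | start => exact ⟨GOPos.mid n, GOStep.abelardPick n, rfl⟩
        | mid n' => exact hR.elim
        | inner q c => exact hR.elim
      | eloisePick n' n hn =>
        cases g' with
        | start => exact hR.elim
        | mid n'' =>
          have : n'' = n' := hR
          subst this
          exact ⟨GOPos.inner (initPos φ s) n, GOStep.eloisePick n'' n hn,
            relP_init M φ B hφ hb₀ s, rfl⟩
        | inner q c => exact hR.elim
      | play p q2 mm kk hb =>
        cases g' with
        | start => exact hR.elim
        | mid n => exact hR.elim
        | inner pp ll =>
          obtain ⟨hRp, hml⟩ := hR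
          subst hml
          obtain ⟨r', hbr, hrel⟩ := back_b M φ B hBne hRp hb hinv
          exact ⟨GOPos.inner r' kk, GOStep.play _ _ _ _ hbr, hrel, rfl⟩
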